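/- arXiv:2410.05702 — 8 statements merged into one kernel-verified Lean document; each statement's English description precedes it below -/
import Mathlib

section
/- Let Φ̂ ∈ Π_{p,T}. Then Σ ⊆ Σ̄, i.e., every pair (A,B) ∈ ℝ^{n×n} × ℝ^{n×m} that is consistent with the data under data perturbation satisfies the quadratic matrix inequality [I_n, A, B] N [I_n, A, B]ᵀ ⪰ 0 with N = [E, 𝐗] Φ̂ [E, 𝐗]ᵀ. -/
open Matrix

/-- The four Moore–Penrose equations characterizing the pseudoinverse. -/
def IsMoorePenroseInv {m n : Type*} [Fintype m] [Fintype n]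
    (A : Matrix m n ℝ) (Ad : Matrix n m ℝ) : Prop :=
  A * Ad * A = A ∧ Ad * A * Ad = Ad ∧ (A * Ad)ᵀ = A * Ad ∧ (Ad * A)ᵀ = Ad * A

/-- The stacked data matrix `𝐗 = [X₊ᵀ, −X₋ᵀ, −U₋ᵀ]ᵀ`. -/
def dataX {n m T : ℕ} (Xp Xm : Matrix (Fin n) (Fin T) ℝ) (Um : Matrix (Fin m) (Fin T) ℝ) :
    Matrix (Fin n ⊕ (Fin n ⊕ Fin m)) (Fin T) ℝ :=
  fromRows Xp (fromRows (-Xm) (-Um))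

/-- The row block `S = [I_n, A, B]`. -/
def rowS {n m : ℕ} (A : Matrix (Fin n) (Fin n) ℝ) (B : Matrix (Fin n) (Fin m) ℝ) :
    Matrix (Fin n) (Fin n ⊕ (Fin n ⊕ Fin m)) ℝ :=
  fromCols 1 (fromCols A B)

/-- `(A,B)` is consistent with the data under data perturbation: there exists `Δ̂`
with `S𝐗 = S E Δ̂` satisfying the QMI for `Φ̂`. -/
def ConsistentDP {n m p T : ℕ} (Xp Xm : Matrix (Fin n) (Fin T) ℝ) (Um : Matrix (Fin m) (Fin T) ℝ)
    (E : Matrix (Fin n ⊕ (Fin n ⊕ Fin m)) (Fin p) ℝ)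
    (Φ : Matrix (Fin p ⊕ Fin T) (Fin p ⊕ Fin T) ℝ)
    (A : Matrix (Fin n) (Fin n) ℝ) (B : Matrix (Fin n) (Fin m) ℝ) : Prop :=
  ∃ Δ : Matrix (Fin p) (Fin T) ℝ,
    rowS A B * dataX Xp Xm Um = rowS A B * E * Δ ∧
    ((fromRows (1 : Matrix (Fin p) (Fin p) ℝ) Δᵀ)ᵀ * Φ * fromRows 1 Δᵀ).PosSemidef

/-- The matrix `N = [E, 𝐗] Φ̂ [E, 𝐗]ᵀ`. -/
def matN {n m p T : ℕ} (Xp Xm : Matrix (Fin n) (Fin T) ℝ) (Um : Matrix (Fin m) (Fin T) ℝ)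
    (E : Matrix (Fin n ⊕ (Fin n ⊕ Fin m)) (Fin p) ℝ)
    (Φ : Matrix (Fin p ⊕ Fin T) (Fin p ⊕ Fin T) ℝ) :
    Matrix (Fin n ⊕ (Fin n ⊕ Fin m)) (Fin n ⊕ (Fin n ⊕ Fin m)) ℝ :=
  fromCols E (dataX Xp Xm Um) * Φ * (fromCols E (dataX Xp Xm Um))ᵀ

/-- Theorem 1, inclusion part: Σ ⊆ Σ̄. -/
theorem Sigma_subset_SigmaBar (n m p T : ℕ)
    (Xp Xm : Matrix (Fin n) (Fin T) ℝ) (Um : Matrix (Fin m) (Fin T) ℝ)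
    (E : Matrix (Fin n ⊕ (Fin n ⊕ Fin m)) (Fin p) ℝ)
    (Φ : Matrix (Fin p ⊕ Fin T) (Fin p ⊕ Fin T) ℝ) (hΦ : Φ.IsSymm)
    -- Φ̂ ∈ Π_{p,T}:
    (Φ22d : Matrix (Fin T) (Fin T) ℝ)
    (hΦMP : IsMoorePenroseInv Φ.toBlocks₂₂ Φ22d)
    (hΦ22 : (-(Φ.toBlocks₂₂)).PosSemidef)
    (hΦker : ∀ x : Fin T → ℝ, Φ.toBlocks₂₂ *ᵥ x = 0 → Φ.toBlocks₁₂ *ᵥ x = 0)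
    (hΦSchur : (Φ.toBlocks₁₁ - Φ.toBlocks₁₂ * Φ22d * Φ.toBlocks₂₁).PosSemidef)
    (A : Matrix (Fin n) (Fin n) ℝ) (B : Matrix (Fin n) (Fin m) ℝ)
    (hAB : ConsistentDP Xp Xm Um E Φ A B) :
    (rowS A B * matN Xp Xm Um E Φ * (rowS A B)ᵀ).PosSemidef := by
  obtain ⟨Δ, hΔ, hM⟩ := hAB
  have key : rowS A B * matN Xp Xm Um E Φ * (rowS A B)ᵀ =
      (rowS A B * E) * ((fromRows (1 : Matrix (Fin p) (Fin p) ℝ) Δᵀ)ᵀ * Φ * fromRows (1 : Matrix (Fin p) (Fin p) ℝ) Δᵀ) * (rowS A B * E)ᵀ := by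
    have h1 : rowS A B * fromCols E (dataX Xp Xm Um) =
        (rowS A B * E) * (fromRows (1 : Matrix (Fin p) (Fin p) ℝ) Δᵀ)ᵀ := by
      rw [mul_fromCols, hΔ, transpose_fromRows, transpose_one, transpose_transpose,
        mul_fromCols, Matrix.mul_one]
    rw [matN, show rowS A B * (fromCols E (dataX Xp Xm Um) * Φ *
        (fromCols E (dataX Xp Xm Um))ᵀ) * (rowS A B)ᵀ =
        (rowS A B * fromCols E (dataX Xp Xm Um)) * Φ *
        (rowS A B * fromCols E (dataX Xp Xm Um))ᵀ by
      rw [transpose_mul]; simp only [Matrix.mul_assoc], h1]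
    rw [transpose_mul, transpose_transpose]; simp only [Matrix.mul_assoc]
  rw [key]
  have := (show ((fromRows (1 : Matrix (Fin p) (Fin p) ℝ) Δᵀ)ᵀ * Φ * fromRows (1 : Matrix (Fin p) (Fin p) ℝ) Δᵀ).PosSemidef from hM).mul_mul_conjTranspose_same (rowS A B * E)
  simpa [conjTranspose_eq_transpose_of_trivial] using this
end

section
/- Let Φ̂ ∈ Π_{p,T} and assume additionally that im E₀ ⊆ im E, where E₀ := [I_n; 0] ∈ ℝ^{(2n+m)×n} (the column space of E₀ is contained in that of E). Then Σ = Σ̄: a pair (A,B) is consistent with the data under data perturbation if and only if [I_n, A, B] N [I_n, A, B]ᵀ ⪰ 0 with N = [E, 𝐗] Φ̂ [E, 𝐗]ᵀ. -/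
open Matrix

lemma conjT_eq_transpose {a b : Type*} (X : Matrix a b ℝ) : Xᴴ = Xᵀ :=
  conjTranspose_eq_transpose_of_trivial X

/-- Existence of a weak pseudoinverse of a real symmetric matrix, via the spectral theorem. -/
lemma exists_weak_pinv {k : ℕ} (M : Matrix (Fin k) (Fin k) ℝ) (hM : M.IsHermitian) :
    ∃ Md : Matrix (Fin k) (Fin k) ℝ,
      M * Md * M = M ∧ Md * M * Md = Md ∧ Mdᵀ = Md := by
  classical
  set U : Matrix (Fin k) (Fin k) ℝ := (hM.eigenvectorUnitary : Matrix (Fin k) (Fin k) ℝ) with hU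
  have h2 : star U * U = 1 := mem_unitaryGroup_iff'.mp hM.eigenvectorUnitary.2
  set f : Fin k → ℝ := RCLike.ofReal ∘ hM.eigenvalues with hf
  set g : Fin k → ℝ := fun i => if f i = 0 then 0 else (f i)⁻¹ with hg
  have hspec : M = U * diagonal f * star U := hM.spectral_theorem
  have key : ∀ a b : Fin k → ℝ,
      (U * diagonal a * star U) * (U * diagonal b * star U) = U * diagonal (a * b) * star U := by
    intro a b
    have h3 : U * diagonal a * star U * (U * diagonal b * star U)
        = U * diagonal a * (star U * U) * diagonal b * star U := by
      simp only [Matrix.mul_assoc]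
    rw [h3, h2, mul_one, Matrix.mul_assoc U (diagonal a), diagonal_mul_diagonal]
    rfl
  have hfgf : f * g * f = f := by
    funext i
    simp only [Pi.mul_apply, hg]
    by_cases h : f i = 0 <;> simp [h]
  have hgfg : g * f * g = g := by
    funext i
    simp only [Pi.mul_apply, hg]
    by_cases h : f i = 0 <;> simp [h]
  refine ⟨U * diagonal g * star U, ?_, ?_, ?_⟩
  · rw [hspec, key, key, hfgf]
  · rw [hspec, key, key, hgfg]
  · rw [transpose_mul, transpose_mul, star_eq_conjTranspose, conjTranspose_eq_transpose_of_trivial,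
      transpose_transpose, diagonal_transpose, Matrix.mul_assoc]

lemma psd_of_symm_idem {a : Type*} [Fintype a] (P : Matrix a a ℝ)
    (h1 : Pᵀ = P) (h2 : P * P = P) : P.PosSemidef := by
  have h : P = Pᴴ * P := by rw [conjT_eq_transpose, h1, h2]
  rw [h]
  exact posSemidef_conjTranspose_mul_self P

lemma psd_conj_t {a b : Type*} [Fintype a] [Fintype b] {M : Matrix a a ℝ} (hM : M.PosSemidef)
    (B : Matrix a b ℝ) : (Bᵀ * M * B).PosSemidef := by
  have h := hM.conjTranspose_mul_mul_same B
  rwa [conjT_eq_transpose] at h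

lemma psd_mul_conj_t {a b : Type*} [Fintype a] [Fintype b] {M : Matrix a a ℝ}
    (hM : M.PosSemidef) (B : Matrix b a ℝ) : (B * M * Bᵀ).PosSemidef := by
  have h := hM.mul_mul_conjTranspose_same B
  rwa [conjT_eq_transpose] at h

lemma eq_zero_of_transpose_mul_self_eq_neg {a b : Type*} [Fintype a] [Fintype b] [DecidableEq b]
    (X : Matrix a b ℝ)
    {M : Matrix b b ℝ} (hM : M.PosSemidef) (h : Xᵀ * X = -M) : X = 0 := by
  have hx : ∀ x : b → ℝ, X *ᵥ x = 0 := by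
    intro x
    have h1 : (X *ᵥ x) ⬝ᵥ (X *ᵥ x) = x ⬝ᵥ ((Xᵀ * X) *ᵥ x) := by
      rw [← mulVec_mulVec, dotProduct_mulVec x Xᵀ, vecMul_transpose]
    rw [h] at h1
    have h2 : x ⬝ᵥ ((-M) *ᵥ x) = -(x ⬝ᵥ (M *ᵥ x)) := by
      rw [neg_mulVec, dotProduct_neg]
    have h3 : 0 ≤ x ⬝ᵥ (M *ᵥ x) := by
      have := hM.dotProduct_mulVec_nonneg x
      simpa using this
    have h4 : (X *ᵥ x) ⬝ᵥ (X *ᵥ x) ≤ 0 := by rw [h1, h2]; linarith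
    have h5 : 0 ≤ (X *ᵥ x) ⬝ᵥ (X *ᵥ x) := by
      apply Finset.sum_nonneg; intro i _; exact mul_self_nonneg _
    exact dotProduct_self_eq_zero.mp (le_antisymm h4 h5)
  ext i j
  have h6 := congrFun (hx (Pi.single j 1)) i
  simpa [mulVec_single] using h6

open scoped MatrixOrder in
set_option maxHeartbeats 1000000 in
lemma core_exists_delta {n p T : ℕ}
    (Φ11 : Matrix (Fin p) (Fin p) ℝ) (Φ12 : Matrix (Fin p) (Fin T) ℝ)
    (Φ21 : Matrix (Fin T) (Fin p) ℝ) (Φ22 : Matrix (Fin T) (Fin T) ℝ)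
    (Φ22d : Matrix (Fin T) (Fin T) ℝ)
    (h21 : Φ21 = Φ12ᵀ) (h22 : Φ22ᵀ = Φ22)
    (hMP1 : Φ22 * Φ22d * Φ22 = Φ22)
    (hMP3 : (Φ22 * Φ22d)ᵀ = Φ22 * Φ22d)
    (hneg : (-Φ22).PosSemidef)
    (hker : Φ12 * Φ22d * Φ22 = Φ12)
    (hSchur : (Φ11 - Φ12 * Φ22d * Φ21).PosSemidef)
    (F : Matrix (Fin p) (Fin n) ℝ) (G : Matrix (Fin T) (Fin n) ℝ)
    (Fd : Matrix (Fin n) (Fin p) ℝ) (hFd : Fd * F = 1)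
    (hM : (Fᵀ * Φ11 * F + Fᵀ * Φ12 * G + Gᵀ * Φ21 * F + Gᵀ * Φ22 * G).PosSemidef) :
    ∃ Δ : Matrix (Fin p) (Fin T) ℝ,
      Δᵀ * F = G ∧
      (Φ11 + Δ * Φ21 + Φ12 * Δᵀ + Δ * Φ22 * Δᵀ).PosSemidef := by
  classical
  subst h21
  -- generalized rewrite rules from the kernel condition
  have hker_r : ∀ {α : Type} [Fintype α] (X : Matrix (Fin T) α ℝ),
      Φ12 * (Φ22d * (Φ22 * X)) = Φ12 * X := by
    intro α _ X
    calc Φ12 * (Φ22d * (Φ22 * X)) = (Φ12 * Φ22d * Φ22) * X := by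
          simp only [Matrix.mul_assoc]
      _ = Φ12 * X := by rw [hker]
  have hker_a : Φ12 * (Φ22d * Φ22) = Φ12 := by rw [← Matrix.mul_assoc, hker]
  have hkerT : Φ22 * Φ22dᵀ * Φ12ᵀ = Φ12ᵀ := by
    have h := congrArg Matrix.transpose hker
    simp only [transpose_mul] at h
    rw [h22] at h
    rw [← Matrix.mul_assoc] at h
    exact h
  have hkerT_r : ∀ {α : Type} [Fintype α] (X : Matrix (Fin p) α ℝ),
      Φ22 * (Φ22dᵀ * (Φ12ᵀ * X)) = Φ12ᵀ * X := by
    intro α _ X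
    calc Φ22 * (Φ22dᵀ * (Φ12ᵀ * X)) = (Φ22 * Φ22dᵀ * Φ12ᵀ) * X := by
          simp only [Matrix.mul_assoc]
      _ = Φ12ᵀ * X := by rw [hkerT]
  have hkerT_a : Φ22 * (Φ22dᵀ * Φ12ᵀ) = Φ12ᵀ := by rw [← Matrix.mul_assoc, hkerT]
  have hdd0 : Φ12 * Φ22dᵀ * Φ12ᵀ = Φ12 * Φ22d * Φ12ᵀ := by
    calc Φ12 * Φ22dᵀ * Φ12ᵀ = Φ12 * Φ22d * Φ22 * Φ22dᵀ * Φ12ᵀ := by rw [hker]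
      _ = Φ12 * Φ22d * (Φ22 * Φ22dᵀ * Φ12ᵀ) := by simp only [Matrix.mul_assoc]
      _ = Φ12 * Φ22d * Φ12ᵀ := by rw [hkerT]
  have hdd_r : ∀ {α : Type} [Fintype α] (X : Matrix (Fin p) α ℝ),
      Φ12 * (Φ22dᵀ * (Φ12ᵀ * X)) = Φ12 * (Φ22d * (Φ12ᵀ * X)) := by
    intro α _ X
    calc Φ12 * (Φ22dᵀ * (Φ12ᵀ * X)) = (Φ12 * Φ22dᵀ * Φ12ᵀ) * X := by
          simp only [Matrix.mul_assoc]
      _ = (Φ12 * Φ22d * Φ12ᵀ) * X := by rw [hdd0]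
      _ = Φ12 * (Φ22d * (Φ12ᵀ * X)) := by simp only [Matrix.mul_assoc]
  have hdd_a : Φ12 * (Φ22dᵀ * Φ12ᵀ) = Φ12 * (Φ22d * Φ12ᵀ) := by
    rw [← Matrix.mul_assoc, ← Matrix.mul_assoc, hdd0]
  -- the projection P
  obtain ⟨P, hPdef⟩ : ∃ P' : Matrix (Fin T) (Fin T) ℝ, P' = Φ22 * Φ22d := ⟨_, rfl⟩
  have hPt : Pᵀ = P := by rw [hPdef]; exact hMP3
  have hPP : P * P = P := by
    rw [hPdef]
    calc Φ22 * Φ22d * (Φ22 * Φ22d) = (Φ22 * Φ22d * Φ22) * Φ22d := by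
          simp only [Matrix.mul_assoc]
      _ = Φ22 * Φ22d := by rw [hMP1]
  have hPΦ : P * Φ22 = Φ22 := by rw [hPdef]; exact hMP1
  have hΦP : Φ22 * P = Φ22 := by
    have h := congrArg Matrix.transpose hPΦ
    simp only [transpose_mul, hPt, h22] at h
    exact h
  -- C = sqrt(-Φ22)
  obtain ⟨C, hCdef⟩ : ∃ C' : Matrix (Fin T) (Fin T) ℝ, C' = CFC.sqrt (-Φ22) := ⟨_, rfl⟩
  have hC2 : C * C = -Φ22 := by rw [hCdef]; exact CFC.sqrt_mul_sqrt_self _ hneg.nonneg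
  have hCt : Cᵀ = C := by
    have h := (CFC.sqrt_nonneg (-Φ22)).posSemidef.isHermitian.eq
    rw [conjT_eq_transpose] at h
    rw [hCdef]; exact h
  have hC2_r : ∀ {α : Type} [Fintype α] (X : Matrix (Fin T) α ℝ),
      C * (C * X) = -(Φ22 * X) := by
    intro α _ X
    rw [← Matrix.mul_assoc, hC2, Matrix.neg_mul]
  have hPC : P * C = C := by
    have hz : (C - P * C) * (C - P * C)ᵀ = 0 := by
      have expand : (C - P * C) * (C - P * C)ᵀ
          = C * C - C * C * P + (P * (C * C) * P - P * (C * C)) := by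
        simp only [transpose_sub, transpose_mul, hCt, hPt]
        simp only [Matrix.sub_mul, Matrix.mul_sub, Matrix.mul_assoc]
        abel
      rw [expand, hC2]
      simp only [Matrix.neg_mul, Matrix.mul_neg, hPΦ, hΦP]
      abel
    have hz2 : (C - P * C) = 0 := by
      have h' : ((C - P * C)ᵀ)ᵀ * (C - P * C)ᵀ = -(0 : Matrix (Fin T) (Fin T) ℝ) := by
        rw [transpose_transpose, hz, neg_zero]
      have h'' := eq_zero_of_transpose_mul_self_eq_neg (C - P * C)ᵀ (PosSemidef.zero) h'
      have := congrArg Matrix.transpose h''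
      rwa [transpose_transpose, transpose_zero] at this
    have := sub_eq_zero.mp hz2
    exact this.symm
  -- Q = sqrt(Schur complement)
  obtain ⟨Q, hQdef⟩ : ∃ Q' : Matrix (Fin p) (Fin p) ℝ, Q' = CFC.sqrt (Φ11 - Φ12 * Φ22d * Φ12ᵀ) := ⟨_, rfl⟩
  have hQ2 : Q * Q = Φ11 - Φ12 * Φ22d * Φ12ᵀ := by rw [hQdef]; exact CFC.sqrt_mul_sqrt_self _ hSchur.nonneg
  have hQt : Qᵀ = Q := by
    have h := (CFC.sqrt_nonneg (Φ11 - Φ12 * Φ22d * Φ12ᵀ)).posSemidef.isHermitian.eq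
    rw [conjT_eq_transpose] at h
    rw [hQdef]; exact h
  have hQ2_a : Q * Q = Φ11 - Φ12 * (Φ22d * Φ12ᵀ) := by rw [hQ2, Matrix.mul_assoc]
  have hQ2_r : ∀ {α : Type} [Fintype α] (X : Matrix (Fin p) α ℝ),
      Q * (Q * X) = Φ11 * X - Φ12 * (Φ22d * (Φ12ᵀ * X)) := by
    intro α _ X
    rw [← Matrix.mul_assoc, hQ2]
    simp only [Matrix.sub_mul, Matrix.mul_assoc]
  -- auxiliary matrices
  obtain ⟨Gt, hGtdef⟩ : ∃ x : Matrix (Fin T) (Fin n) ℝ, x = G + Φ22dᵀ * Φ12ᵀ * F := ⟨_, rfl⟩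
  obtain ⟨Y, hYdef⟩ : ∃ x : Matrix (Fin p) (Fin n) ℝ, x = Q * F := ⟨_, rfl⟩
  obtain ⟨D, hDdef⟩ : ∃ x : Matrix (Fin T) (Fin n) ℝ, x = C * Gt := ⟨_, rfl⟩
  -- the key identity
  have hYtY : Yᵀ * Y = Fᵀ * (Φ11 * F) - Fᵀ * (Φ12 * (Φ22d * (Φ12ᵀ * F))) := by
    rw [hYdef]
    simp only [transpose_mul, hQt, Matrix.mul_assoc, hQ2_r]
    simp only [Matrix.mul_sub]
  have hDtD : Dᵀ * D = -(Gtᵀ * (Φ22 * Gt)) := by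
    rw [hDdef]
    simp only [transpose_mul, hCt, Matrix.mul_assoc, hC2_r, Matrix.mul_neg]
  have hMeq : Fᵀ * Φ11 * F + Fᵀ * Φ12 * G + Gᵀ * Φ12ᵀ * F + Gᵀ * Φ22 * G
      = Yᵀ * Y - Dᵀ * D := by
    rw [hYtY, hDtD, hGtdef, sub_neg_eq_add]
    simp only [transpose_add, transpose_mul, transpose_transpose, Matrix.mul_add,
      Matrix.add_mul, Matrix.mul_assoc]
    simp only [hker_r, hkerT_r, hdd_r]
    abel
  rw [hMeq] at hM
  -- weak pseudoinverse of YᵀY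
  have hNherm : (Yᵀ * Y).IsHermitian := by
    have h := isHermitian_conjTranspose_mul_self Y
    rwa [conjT_eq_transpose] at h
  obtain ⟨Nd, hN1, hN2, hN3⟩ := exists_weak_pinv (Yᵀ * Y) hNherm
  obtain ⟨Z, hZdef⟩ : ∃ x : Matrix (Fin n) (Fin n) ℝ, x = 1 - Nd * (Yᵀ * Y) := ⟨_, rfl⟩
  have hYYZ : (Yᵀ * Y) * Z = 0 := by
    rw [hZdef, Matrix.mul_sub, Matrix.mul_one, ← Matrix.mul_assoc, hN1, sub_self]
  have hDZ : D * Z = 0 := by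
    apply eq_zero_of_transpose_mul_self_eq_neg (D * Z) (psd_conj_t hM Z)
    calc (D * Z)ᵀ * (D * Z) = Zᵀ * ((Yᵀ * Y) * Z) - Zᵀ * (Yᵀ * Y - Dᵀ * D) * Z := by
          simp only [Matrix.sub_mul, Matrix.mul_sub, transpose_mul, Matrix.mul_assoc]
          abel
      _ = -(Zᵀ * (Yᵀ * Y - Dᵀ * D) * Z) := by
          rw [hYYZ, Matrix.mul_zero, zero_sub]
  have hDNd : D * (Nd * (Yᵀ * Y)) = D := by
    have h : D * Z = D - D * (Nd * (Yᵀ * Y)) := by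
      rw [hZdef, Matrix.mul_sub, Matrix.mul_one]
    rw [h] at hDZ
    have := sub_eq_zero.mp hDZ
    exact this.symm
  -- R
  obtain ⟨Yd, hYddef⟩ : ∃ x : Matrix (Fin n) (Fin p) ℝ, x = Nd * Yᵀ := ⟨_, rfl⟩
  obtain ⟨R, hRdef⟩ : ∃ x : Matrix (Fin T) (Fin p) ℝ, x = D * Yd * Q := ⟨_, rfl⟩
  have hRF : R * F = D := by
    rw [hRdef, hYddef]
    calc D * (Nd * Yᵀ) * Q * F = D * (Nd * (Yᵀ * (Q * F))) := by
          simp only [Matrix.mul_assoc]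
      _ = D * (Nd * (Yᵀ * Y)) := by rw [← hYdef]
      _ = D := hDNd
  -- Py
  obtain ⟨Py, hPydef⟩ : ∃ x : Matrix (Fin p) (Fin p) ℝ, x = Y * Nd * Yᵀ := ⟨_, rfl⟩
  have hPyt : Pyᵀ = Py := by
    rw [hPydef]
    simp only [transpose_mul, transpose_transpose, hN3, Matrix.mul_assoc]
  have hPyP : Py * Py = Py := by
    rw [hPydef]
    calc Y * Nd * Yᵀ * (Y * Nd * Yᵀ) = Y * (Nd * (Yᵀ * Y) * Nd) * Yᵀ := by
          simp only [Matrix.mul_assoc]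
      _ = Y * Nd * Yᵀ := by rw [hN2, Matrix.mul_assoc]
  have hYdYY : Ydᵀ * ((Yᵀ * Y) * Yd) = Py := by
    rw [hYddef, hPydef]
    simp only [transpose_mul, transpose_transpose, hN3]
    calc Y * Nd * ((Yᵀ * Y) * (Nd * Yᵀ)) = Y * (Nd * (Yᵀ * Y) * Nd) * Yᵀ := by
          simp only [Matrix.mul_assoc]
      _ = Y * Nd * Yᵀ := by rw [hN2, Matrix.mul_assoc]
  -- Q*Q - RᵀR is PSD
  have hSR : (Q * Q - Rᵀ * R).PosSemidef := by
    have hRt : Rᵀ = Q * (Ydᵀ * Dᵀ) := by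
      rw [hRdef]
      simp only [transpose_mul, hQt, Matrix.mul_assoc]
    have key : Q * Q - Rᵀ * R
        = Qᵀ * (1 - Py) * Q + (Yd * Q)ᵀ * (Yᵀ * Y - Dᵀ * D) * (Yd * Q) := by
      rw [hRt, hRdef]
      simp only [transpose_mul, hQt, ← hYdYY]
      simp only [Matrix.mul_sub, Matrix.sub_mul, Matrix.mul_one, Matrix.one_mul,
        Matrix.mul_assoc]
      abel
    rw [key]
    apply PosSemidef.add
    · have h1Py : (1 - Py).PosSemidef := by
        apply psd_of_symm_idem
        · simp only [transpose_sub, transpose_one, hPyt]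
        · simp only [Matrix.mul_sub, Matrix.sub_mul, Matrix.mul_one, Matrix.one_mul, hPyP]
          abel
      exact psd_conj_t h1Py Q
    · exact psd_conj_t hM (Yd * Q)
  -- Θ
  obtain ⟨Cd, hCddef⟩ : ∃ x : Matrix (Fin T) (Fin T) ℝ, x = -(C * Φ22d) := ⟨_, rfl⟩
  have hCCd : C * Cd = P := by
    rw [hCddef, hPdef, Matrix.mul_neg, ← Matrix.mul_assoc, hC2, Matrix.neg_mul, neg_neg]
  have hCCdC : C * Cd * C = C := by rw [hCCd, hPC]
  obtain ⟨Θt, hΘtdef⟩ : ∃ x : Matrix (Fin T) (Fin p) ℝ,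
      x = Cd * R + Gt * Fd - Cd * (C * (Gt * Fd)) := ⟨_, rfl⟩
  have hΘtF : Θt * F = Gt := by
    rw [hΘtdef]
    simp only [Matrix.sub_mul, Matrix.add_mul, Matrix.mul_assoc, hFd, Matrix.mul_one]
    rw [hRF, hDdef]
    abel
  have hCΘt : C * Θt = P * R := by
    rw [hΘtdef]
    simp only [Matrix.mul_add, Matrix.mul_sub]
    rw [show C * (Cd * R) = P * R from by rw [← Matrix.mul_assoc, hCCd],
      show C * (Cd * (C * (Gt * Fd))) = C * (Gt * Fd) from by
        rw [← Matrix.mul_assoc, ← Matrix.mul_assoc, hCCdC]]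
    abel
  -- the square term
  have hΘΦΘ : Θtᵀ * (Φ22 * Θt) = -(Rᵀ * (P * R)) := by
    calc Θtᵀ * (Φ22 * Θt)
        = Θtᵀ * (C * (C * Θt)) - Θtᵀ * (C * (C * Θt)) + Θtᵀ * (Φ22 * Θt) := by abel
      _ = Θtᵀ * (-(Φ22 * Θt)) - Θtᵀ * (C * (C * Θt)) + Θtᵀ * (Φ22 * Θt) := by rw [hC2_r]
      _ = -(Θtᵀ * (Cᵀ * (C * Θt))) := by rw [hCt, Matrix.mul_neg]; abel
      _ = -((C * Θt)ᵀ * (C * Θt)) := by simp only [transpose_mul, Matrix.mul_assoc]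
      _ = -((P * R)ᵀ * (P * R)) := by rw [hCΘt]
      _ = -(Rᵀ * ((P * P) * R)) := by simp only [transpose_mul, hPt, Matrix.mul_assoc]
      _ = -(Rᵀ * (P * R)) := by rw [hPP]
  -- conclusion
  refine ⟨Θtᵀ - Φ12 * Φ22d, ?_, ?_⟩
  · simp only [transpose_sub, transpose_mul, transpose_transpose]
    rw [Matrix.sub_mul, hΘtF, hGtdef, Matrix.mul_assoc]
    abel
  · have h1P : (1 - P).PosSemidef := by
      apply psd_of_symm_idem
      · simp only [transpose_sub, transpose_one, hPt]
      · simp only [Matrix.mul_sub, Matrix.sub_mul, Matrix.mul_one, Matrix.one_mul, hPP]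
        abel
    have hfinal : Φ11 + (Θtᵀ - Φ12 * Φ22d) * Φ12ᵀ + Φ12 * (Θtᵀ - Φ12 * Φ22d)ᵀ
        + (Θtᵀ - Φ12 * Φ22d) * Φ22 * (Θtᵀ - Φ12 * Φ22d)ᵀ
        = (Q * Q - Rᵀ * R) + Rᵀ * (1 - P) * R := by
      have hrhs : (Q * Q - Rᵀ * R) + Rᵀ * (1 - P) * R = Q * Q - Rᵀ * (P * R) := by
        simp only [Matrix.sub_mul, Matrix.mul_sub, Matrix.one_mul, Matrix.mul_one,
          Matrix.mul_assoc]
        abel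
      rw [hrhs]
      calc Φ11 + (Θtᵀ - Φ12 * Φ22d) * Φ12ᵀ + Φ12 * (Θtᵀ - Φ12 * Φ22d)ᵀ
          + (Θtᵀ - Φ12 * Φ22d) * Φ22 * (Θtᵀ - Φ12 * Φ22d)ᵀ
          = Φ11 - Φ12 * (Φ22d * Φ12ᵀ) + Θtᵀ * (Φ22 * Θt) := by
            simp only [transpose_sub, transpose_mul, transpose_transpose,
              Matrix.sub_mul, Matrix.mul_sub, Matrix.add_mul, Matrix.mul_add,
              Matrix.mul_assoc, hkerT_a, hkerT_r, hker_r, hker_a, hdd_a, hdd_r]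
            abel
        _ = Q * Q - Rᵀ * (P * R) := by rw [hΘΦΘ, hQ2_a]; abel
    rw [hfinal]
    exact hSR.add (psd_conj_t h1P R)


set_option maxHeartbeats 2000000 in
/-- Theorem 1, equality part under im E₀ ⊆ im E: Σ = Σ̄. -/
theorem Sigma_eq_SigmaBar_of_im_subset (n m p T : ℕ)
    (Xp Xm : Matrix (Fin n) (Fin T) ℝ) (Um : Matrix (Fin m) (Fin T) ℝ)
    (E : Matrix (Fin n ⊕ (Fin n ⊕ Fin m)) (Fin p) ℝ)
    (Φ : Matrix (Fin p ⊕ Fin T) (Fin p ⊕ Fin T) ℝ) (hΦ : Φ.IsSymm)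
    -- Φ̂ ∈ Π_{p,T}:
    (Φ22d : Matrix (Fin T) (Fin T) ℝ)
    (hΦMP : IsMoorePenroseInv Φ.toBlocks₂₂ Φ22d)
    (hΦ22 : (-(Φ.toBlocks₂₂)).PosSemidef)
    (hΦker : ∀ x : Fin T → ℝ, Φ.toBlocks₂₂ *ᵥ x = 0 → Φ.toBlocks₁₂ *ᵥ x = 0)
    (hΦSchur : (Φ.toBlocks₁₁ - Φ.toBlocks₁₂ * Φ22d * Φ.toBlocks₂₁).PosSemidef)
    -- im E₀ ⊆ im E, where E₀ = [I_n; 0]: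
    (hE : ∀ y : Fin n → ℝ, ∃ z : Fin p → ℝ,
      (fromRows (1 : Matrix (Fin n) (Fin n) ℝ)
        (0 : Matrix (Fin n ⊕ Fin m) (Fin n) ℝ)) *ᵥ y = E *ᵥ z)
    (A : Matrix (Fin n) (Fin n) ℝ) (B : Matrix (Fin n) (Fin m) ℝ) :
    ConsistentDP Xp Xm Um E Φ A B ↔
    (rowS A B * matN Xp Xm Um E Φ * (rowS A B)ᵀ).PosSemidef := by
  classical
  constructor
  · rintro ⟨Δ, hc, hq⟩
    have hfc : (fromRows (1 : Matrix (Fin p) (Fin p) ℝ) Δᵀ)ᵀ = fromCols 1 Δ := by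
      rw [transpose_fromRows, transpose_one, transpose_transpose]
    have heq : rowS A B * matN Xp Xm Um E Φ * (rowS A B)ᵀ
        = (rowS A B * E) * ((fromRows (1 : Matrix (Fin p) (Fin p) ℝ) Δᵀ)ᵀ * Φ * fromRows (1 : Matrix (Fin p) (Fin p) ℝ) Δᵀ) * (rowS A B * E)ᵀ := by
      rw [hfc]
      unfold matN
      calc rowS A B * (fromCols E (dataX Xp Xm Um) * Φ * (fromCols E (dataX Xp Xm Um))ᵀ)
            * (rowS A B)ᵀ
          = (rowS A B * fromCols E (dataX Xp Xm Um)) * Φ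
            * (rowS A B * fromCols E (dataX Xp Xm Um))ᵀ := by
            simp only [transpose_mul, Matrix.mul_assoc]
        _ = ((rowS A B * E) * fromCols (1 : Matrix (Fin p) (Fin p) ℝ) Δ) * Φ * ((rowS A B * E) * fromCols (1 : Matrix (Fin p) (Fin p) ℝ) Δ)ᵀ := by
            rw [mul_fromCols, mul_fromCols, Matrix.mul_one, hc]
        _ = (rowS A B * E) * (fromCols (1 : Matrix (Fin p) (Fin p) ℝ) Δ * Φ * fromRows (1 : Matrix (Fin p) (Fin p) ℝ) Δᵀ) * (rowS A B * E)ᵀ := by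
            simp only [transpose_mul, transpose_fromCols, transpose_one, transpose_transpose,
              Matrix.mul_assoc]
    rw [heq]
    exact psd_mul_conj_t hq (rowS A B * E)
  · intro hN
    -- notation
    have hSNS : rowS A B * matN Xp Xm Um E Φ * (rowS A B)ᵀ
        = (rowS A B * E)ᵀᵀ * Φ.toBlocks₁₁ * (rowS A B * E)ᵀ
          + (rowS A B * E)ᵀᵀ * Φ.toBlocks₁₂ * (rowS A B * dataX Xp Xm Um)ᵀ
          + (rowS A B * dataX Xp Xm Um)ᵀᵀ * Φ.toBlocks₂₁ * (rowS A B * E)ᵀ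
          + (rowS A B * dataX Xp Xm Um)ᵀᵀ * Φ.toBlocks₂₂ * (rowS A B * dataX Xp Xm Um)ᵀ := by
      unfold matN
      calc rowS A B * (fromCols E (dataX Xp Xm Um) * Φ * (fromCols E (dataX Xp Xm Um))ᵀ)
            * (rowS A B)ᵀ
          = (rowS A B * fromCols E (dataX Xp Xm Um)) * Φ
            * (rowS A B * fromCols E (dataX Xp Xm Um))ᵀ := by
            simp only [transpose_mul, Matrix.mul_assoc]
        _ = fromCols (rowS A B * E) (rowS A B * dataX Xp Xm Um) * Φ
            * fromRows (rowS A B * E)ᵀ (rowS A B * dataX Xp Xm Um)ᵀ := by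
            rw [mul_fromCols, transpose_fromCols]
        _ = _ := by
            conv_lhs => rw [← fromBlocks_toBlocks Φ]
            rw [fromCols_mul_fromBlocks, fromCols_mul_fromRows]
            simp only [transpose_transpose, Matrix.add_mul]
            abel
    rw [hSNS] at hN
    -- symmetry facts
    have h21 : Φ.toBlocks₂₁ = Φ.toBlocks₁₂ᵀ := by
      ext i j
      exact (congrFun (congrFun hΦ (Sum.inr i)) (Sum.inl j)).symm
    have h22 : Φ.toBlocks₂₂ᵀ = Φ.toBlocks₂₂ := by
      ext i j
      exact congrFun (congrFun hΦ (Sum.inr i)) (Sum.inr j)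
    -- kernel condition in matrix form
    have hkermat : Φ.toBlocks₁₂ * Φ22d * Φ.toBlocks₂₂ = Φ.toBlocks₁₂ := by
      have hvec : ∀ x, (Φ.toBlocks₁₂ * Φ22d * Φ.toBlocks₂₂) *ᵥ x = Φ.toBlocks₁₂ *ᵥ x := by
        intro x
        have h0 : Φ.toBlocks₂₂ *ᵥ (x - (Φ22d * Φ.toBlocks₂₂) *ᵥ x) = 0 := by
          rw [mulVec_sub, mulVec_mulVec, ← Matrix.mul_assoc, hΦMP.1, sub_self]
        have h1 := hΦker _ h0
        rw [mulVec_sub, sub_eq_zero, mulVec_mulVec, ← Matrix.mul_assoc] at h1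
        exact h1.symm
      ext i j
      have h2 := congrFun (hvec (Pi.single j 1)) i
      simpa [mulVec_single] using h2
    -- left inverse of F from the image condition
    have hEH : ∃ H : Matrix (Fin p) (Fin n) ℝ,
        E * H = fromRows (1 : Matrix (Fin n) (Fin n) ℝ) (0 : Matrix (Fin n ⊕ Fin m) (Fin n) ℝ) := by
      refine ⟨Matrix.of (fun j i => (hE (Pi.single i 1)).choose j), ?_⟩
      ext i j
      have h := congrFun ((hE (Pi.single j 1)).choose_spec) i
      rw [mul_apply]
      simp only [mulVec, dotProduct, Pi.single_apply, mul_ite, mul_one, mul_zero,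
        Finset.sum_ite_eq', Finset.mem_univ, if_true] at h
      simpa [Matrix.of_apply] using h.symm
    obtain ⟨H, hH⟩ := hEH
    have hFd : Hᵀ * (rowS A B * E)ᵀ = 1 := by
      rw [← transpose_mul, Matrix.mul_assoc, hH]
      have : rowS A B * fromRows (1 : Matrix (Fin n) (Fin n) ℝ)
          (0 : Matrix (Fin n ⊕ Fin m) (Fin n) ℝ) = 1 := by
        unfold rowS
        rw [fromCols_mul_fromRows]
        simp
      rw [this, transpose_one]
    obtain ⟨Δ, h1, h2⟩ := core_exists_delta Φ.toBlocks₁₁ Φ.toBlocks₁₂ Φ.toBlocks₂₁ Φ.toBlocks₂₂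
      Φ22d h21 h22 hΦMP.1 hΦMP.2.2.1 hΦ22 hkermat hΦSchur
      (rowS A B * E)ᵀ (rowS A B * dataX Xp Xm Um)ᵀ Hᵀ hFd hN
    refine ⟨Δ, ?_, ?_⟩
    · have h3 := congrArg Matrix.transpose h1
      simp only [transpose_mul, transpose_transpose] at h3
      exact h3.symm
    · have hexp : (fromRows (1 : Matrix (Fin p) (Fin p) ℝ) Δᵀ)ᵀ * Φ * fromRows (1 : Matrix (Fin p) (Fin p) ℝ) Δᵀ
          = Φ.toBlocks₁₁ + Δ * Φ.toBlocks₂₁ + Φ.toBlocks₁₂ * Δᵀ + Δ * Φ.toBlocks₂₂ * Δᵀ := by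
        rw [transpose_fromRows, transpose_one, transpose_transpose]
        conv_lhs => rw [← fromBlocks_toBlocks Φ]
        rw [fromCols_mul_fromBlocks, fromCols_mul_fromRows]
        simp only [Matrix.one_mul, Matrix.mul_one, Matrix.add_mul]
        abel
      change ((fromRows (1 : Matrix (Fin p) (Fin p) ℝ) Δᵀ)ᵀ * Φ * fromRows (1 : Matrix (Fin p) (Fin p) ℝ) Δᵀ).PosSemidef
      rw [hexp]
      exact h2
end

section
/- Let Φ̂ ∈ Π_{p,T} and assume Σ is nonempty (it contains the true system). If there exist a symmetric positive definite P ∈ ℝ^{n×n}, a matrix L ∈ ℝ^{m×n}, and a scalar β > 0 such that the (3n+m)×(3n+m) block matrix [[P − β I_n, 0, 0, 0],[0, −P, −Lᵀ, 0],[0, −L, 0, L],[0, 0, Lᵀ, P]] − [[N, 0],[0, 0]] ⪰ 0 (block sizes n, n, m, n, with N ∈ ℝ^{(2n+m)×(2n+m)} occupying the top-left (2n+m)×(2n+m) corner), then the data is informative for quadratic stabilization; moreover the controller K = L P⁻¹ satisfies P − (A + B K) P (A + B K)ᵀ ≻ 0 for all (A,B) ∈ Σ. -/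
open Matrix

/-- The `(3n+m)×(3n+m)` LMI (block sizes `n, n, m, n`,
with `N` in the top-left `(2n+m)×(2n+m)` corner). -/
def LMIcond {n m : ℕ} (P : Matrix (Fin n) (Fin n) ℝ) (L : Matrix (Fin m) (Fin n) ℝ) (β : ℝ)
    (N : Matrix (Fin n ⊕ (Fin n ⊕ Fin m)) (Fin n ⊕ (Fin n ⊕ Fin m)) ℝ) : Prop :=
  (fromBlocks
      (fromBlocks (P - β • 1) 0 0 (fromBlocks (-P) (-Lᵀ) (-L) 0))
      (fromRows 0 (fromRows 0 L))
      (fromCols 0 (fromCols 0 Lᵀ))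
      P
    - fromBlocks N 0 0 0).PosSemidef

/-- Theorem 3, sufficiency: feasibility of the LMI implies informativity for quadratic
stabilization, and the controller `K = L P⁻¹` stabilizes every system in Σ. -/
theorem informativity_data_perturbation_sufficient (n m p T : ℕ)
    (Xp Xm : Matrix (Fin n) (Fin T) ℝ) (Um : Matrix (Fin m) (Fin T) ℝ)
    (E : Matrix (Fin n ⊕ (Fin n ⊕ Fin m)) (Fin p) ℝ)
    (Φ : Matrix (Fin p ⊕ Fin T) (Fin p ⊕ Fin T) ℝ) (hΦ : Φ.IsSymm)
    -- Φ̂ ∈ Π_{p,T}: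
    (Φ22d : Matrix (Fin T) (Fin T) ℝ)
    (hΦMP : IsMoorePenroseInv Φ.toBlocks₂₂ Φ22d)
    (hΦ22 : (-(Φ.toBlocks₂₂)).PosSemidef)
    (hΦker : ∀ x : Fin T → ℝ, Φ.toBlocks₂₂ *ᵥ x = 0 → Φ.toBlocks₁₂ *ᵥ x = 0)
    (hΦSchur : (Φ.toBlocks₁₁ - Φ.toBlocks₁₂ * Φ22d * Φ.toBlocks₂₁).PosSemidef)
    -- Σ is nonempty:
    (hNonempty : ∃ (A : Matrix (Fin n) (Fin n) ℝ) (B : Matrix (Fin n) (Fin m) ℝ),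
      ConsistentDP Xp Xm Um E Φ A B)
    (P : Matrix (Fin n) (Fin n) ℝ) (L : Matrix (Fin m) (Fin n) ℝ) (β : ℝ)
    (hP : P.PosDef) (hβ : 0 < β)
    (hLMI : LMIcond P L β (matN Xp Xm Um E Φ)) :
    -- the data is informative for quadratic stabilization:
    (∃ (K : Matrix (Fin m) (Fin n) ℝ) (P' : Matrix (Fin n) (Fin n) ℝ), P'.PosDef ∧
      ∀ A B, ConsistentDP Xp Xm Um E Φ A B →
        (P' - (A + B * K) * P' * (A + B * K)ᵀ).PosDef) ∧
    -- moreover K = L P⁻¹ works with the Lyapunov matrix P: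
    (∀ A B, ConsistentDP Xp Xm Um E Φ A B →
      (P - (A + B * (L * P⁻¹)) * P * (A + B * (L * P⁻¹))ᵀ).PosDef) := by
  have hdet : IsUnit P.det := hP.det_pos.ne'.isUnit
  have hPT : Pᵀ = P := by
    rw [← conjTranspose_eq_transpose_of_trivial]; exact hP.1
  have hβ1 : (β • (1 : Matrix (Fin n) (Fin n) ℝ)).PosDef := by
    rw [smul_one_eq_diagonal]
    exact Matrix.PosDef.diagonal (fun _ => hβ)
  have key : ∀ A B, ConsistentDP Xp Xm Um E Φ A B →
      (P - (A + B * (L * P⁻¹)) * P * (A + B * (L * P⁻¹))ᵀ).PosDef := by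
    intro A B hAB
    obtain ⟨Δ, hcons, hQMI⟩ := hAB
    have hLMI' : (fromBlocks
        (fromBlocks (P - β • 1) 0 0 (fromBlocks (-P) (-Lᵀ) (-L) 0))
        (fromRows 0 (fromRows 0 L))
        (fromCols 0 (fromCols 0 Lᵀ))
        P
      - fromBlocks (matN Xp Xm Um E Φ) 0 0 0).PosSemidef := hLMI
    set K : Matrix (Fin m) (Fin n) ℝ := L * P⁻¹ with hK
    have hKT : Kᵀ = P⁻¹ * Lᵀ := by
      rw [hK, transpose_mul, transpose_nonsing_inv, hPT]
    have hKP : K * P = L := by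
      rw [hK, Matrix.mul_assoc, Matrix.nonsing_inv_mul _ hdet, Matrix.mul_one]
    have hPKT : P * Kᵀ = Lᵀ := by
      rw [hKT, ← Matrix.mul_assoc, Matrix.mul_nonsing_inv _ hdet, Matrix.one_mul]
    set S := rowS A B with hS
    set V : Matrix (Fin n) (Fin n) ℝ := -(B * K) with hV
    set Z := fromCols S V with hZ
    set N' := matN Xp Xm Um E Φ with hN'
    set Big := fromBlocks
        (fromBlocks (P - β • 1) 0 0 (fromBlocks (-P) (-Lᵀ) (-L) 0))
        (fromRows 0 (fromRows 0 L))
        (fromCols 0 (fromCols 0 Lᵀ))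
        P with hBig
    have hZT : Zᵀ = fromRows Sᵀ Vᵀ := by rw [hZ, transpose_fromCols]
    have hST : Sᵀ = fromRows 1 (fromRows Aᵀ Bᵀ) := by
      rw [hS, rowS, transpose_fromCols, transpose_fromCols, transpose_one]
    -- S * N' * Sᵀ is PSD
    have hSEX : S * fromCols E (dataX Xp Xm Um) = (S * E) * fromCols 1 Δ := by
      rw [mul_fromCols, mul_fromCols, Matrix.mul_one, hcons]
    have hRow : fromRows (1 : Matrix (Fin p) (Fin p) ℝ) Δᵀ = (fromCols 1 Δ)ᵀ := by
      rw [transpose_fromCols, transpose_one]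
    have hQ : ((S * E) * ((fromRows (1 : Matrix (Fin p) (Fin p) ℝ) Δᵀ)ᵀ * Φ * fromRows (1 : Matrix (Fin p) (Fin p) ℝ) Δᵀ) * (S * E)ᵀ).PosSemidef := by
      have := hQMI.mul_mul_conjTranspose_same (S * E)
      rwa [conjTranspose_eq_transpose_of_trivial] at this
    have hSN : (S * N' * Sᵀ).PosSemidef := by
      have hEq : S * N' * Sᵀ
          = (S * E) * ((fromRows (1 : Matrix (Fin p) (Fin p) ℝ) Δᵀ)ᵀ * Φ * fromRows (1 : Matrix (Fin p) (Fin p) ℝ) Δᵀ) * (S * E)ᵀ := by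
        rw [hN', matN, hRow, transpose_transpose]
        calc S * (fromCols E (dataX Xp Xm Um) * Φ * (fromCols E (dataX Xp Xm Um))ᵀ) * Sᵀ
            = (S * fromCols E (dataX Xp Xm Um)) * Φ
                * (S * fromCols E (dataX Xp Xm Um))ᵀ := by
              simp only [transpose_mul, Matrix.mul_assoc]
          _ = ((S * E) * fromCols (1 : Matrix (Fin p) (Fin p) ℝ) Δ) * Φ * ((S * E) * fromCols (1 : Matrix (Fin p) (Fin p) ℝ) Δ)ᵀ := by rw [hSEX]
          _ = (S * E) * (fromCols (1 : Matrix (Fin p) (Fin p) ℝ) Δ * Φ * (fromCols (1 : Matrix (Fin p) (Fin p) ℝ) Δ)ᵀ) * (S * E)ᵀ := by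
              simp only [transpose_mul, Matrix.mul_assoc]
      rw [hEq]; exact hQ
    -- the LMI transformed by Z
    have hZM : (Z * (Big - fromBlocks N' 0 0 0) * Zᵀ).PosSemidef := by
      have := hLMI'.mul_mul_conjTranspose_same Z
      rwa [conjTranspose_eq_transpose_of_trivial] at this
    have hZBig : Z * Big * Zᵀ = P - β • 1 - (A + B * K) * P * (A + B * K)ᵀ := by
      rw [hZT, hST, hZ, hBig, hS, rowS]
      rw [fromCols_mul_fromBlocks]
      rw [fromCols_mul_fromBlocks]
      have e1 : K * (P * Aᵀ) = L * Aᵀ := by rw [← Matrix.mul_assoc, hKP]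
      have e2 : P * (Kᵀ * Bᵀ) = Lᵀ * Bᵀ := by rw [← Matrix.mul_assoc, hPKT]
      have e3 : K * (Lᵀ * Bᵀ) = L * (Kᵀ * Bᵀ) := by
        rw [hK, hKT]; simp only [Matrix.mul_assoc]
      simp only [mul_fromCols, fromCols_mul_fromRows, fromRows_mul,
        fromBlocks_mul_fromRows, hV,
        Matrix.mul_zero, Matrix.zero_mul, Matrix.mul_one, Matrix.one_mul,
        Matrix.add_mul, Matrix.mul_add, Matrix.mul_neg, Matrix.neg_mul,
        add_zero, zero_add, neg_neg, Matrix.mul_assoc, transpose_add, transpose_mul,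
        transpose_neg, e1, e2, e3]
      abel
    have hZN : Z * fromBlocks N' 0 0 (0 : Matrix (Fin n) (Fin n) ℝ) * Zᵀ = S * N' * Sᵀ := by
      rw [hZT, hZ, fromCols_mul_fromBlocks]
      simp only [Matrix.mul_zero, add_zero, Matrix.zero_mul, zero_add,
        fromCols_mul_fromRows]
    have hsplit : Z * (Big - fromBlocks N' 0 0 0) * Zᵀ
        = Z * Big * Zᵀ - Z * fromBlocks N' 0 0 (0 : Matrix (Fin n) (Fin n) ℝ) * Zᵀ := by
      rw [Matrix.mul_sub, Matrix.sub_mul]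
    have hfin : P - (A + B * K) * P * (A + B * K)ᵀ
        = (Z * (Big - fromBlocks N' 0 0 0) * Zᵀ) + S * N' * Sᵀ + β • 1 := by
      rw [hsplit, hZBig, hZN]; abel
    rw [hfin]
    exact Matrix.PosDef.posSemidef_add (hZM.add hSN) hβ1
  exact ⟨⟨L * P⁻¹, P, hP, key⟩, key⟩
end

section
/- Let Φ^W ∈ ℝ^{(n+T)×(n+T)} be symmetric and define N^W := [[I_n, X₊],[0, −X₋],[0, −U₋]] Φ^W [[I_n, X₊],[0, −X₋],[0, −U₋]]ᵀ ∈ ℝ^{(2n+m)×(2n+m)}. Then a pair (A,B) ∈ ℝ^{n×n} × ℝ^{n×m} satisfies: there exists W₋ ∈ ℝ^{n×T} with X₊ = A X₋ + B U₋ + W₋ and [I_n; W₋ᵀ]ᵀ Φ^W [I_n; W₋ᵀ] ⪰ 0, if and only if [I_n, A, B] N^W [I_n, A, B]ᵀ ⪰ 0. -/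
open Matrix

lemma key_mul (n m T : ℕ)
    (Xp Xm : Matrix (Fin n) (Fin T) ℝ) (Um : Matrix (Fin m) (Fin T) ℝ)
    (A : Matrix (Fin n) (Fin n) ℝ) (B : Matrix (Fin n) (Fin m) ℝ) :
    fromCols (1 : Matrix (Fin n) (Fin n) ℝ) (fromCols A B) *
      fromBlocks 1 Xp (0 : Matrix (Fin n ⊕ Fin m) (Fin n) ℝ) (fromRows (-Xm) (-Um)) =
    fromCols (1 : Matrix (Fin n) (Fin n) ℝ) (Xp - A * Xm - B * Um) := by
  rw [← fromRows_fromCols_eq_fromBlocks]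
  simp only [fromCols_mul_fromRows, mul_fromCols, Matrix.mul_zero, Matrix.one_mul]
  ext i j
  cases j <;> simp [fromCols, mul_neg, sub_eq_add_neg, add_assoc]

/-- Proposition 2: QMI characterization of the admissible system set under system noise. -/
theorem system_set_qmi_characterization (n m T : ℕ)
    (Xp Xm : Matrix (Fin n) (Fin T) ℝ) (Um : Matrix (Fin m) (Fin T) ℝ)
    (Φ : Matrix (Fin n ⊕ Fin T) (Fin n ⊕ Fin T) ℝ) (hΦ : Φ.IsSymm)
    (A : Matrix (Fin n) (Fin n) ℝ) (B : Matrix (Fin n) (Fin m) ℝ) :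
    (∃ W : Matrix (Fin n) (Fin T) ℝ,
        Xp = A * Xm + B * Um + W ∧
        ((fromRows (1 : Matrix (Fin n) (Fin n) ℝ) Wᵀ)ᵀ * Φ * fromRows 1 Wᵀ).PosSemidef) ↔
    (fromCols (1 : Matrix (Fin n) (Fin n) ℝ) (fromCols A B) *
        (fromBlocks 1 Xp (0 : Matrix (Fin n ⊕ Fin m) (Fin n) ℝ) (fromRows (-Xm) (-Um)) * Φ *
          (fromBlocks 1 Xp (0 : Matrix (Fin n ⊕ Fin m) (Fin n) ℝ) (fromRows (-Xm) (-Um)))ᵀ) *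
        (fromCols (1 : Matrix (Fin n) (Fin n) ℝ) (fromCols A B))ᵀ).PosSemidef := by
  have hrw : ∀ W : Matrix (Fin n) (Fin T) ℝ,
      (fromRows (1 : Matrix (Fin n) (Fin n) ℝ) Wᵀ)ᵀ * Φ * fromRows (1 : Matrix (Fin n) (Fin n) ℝ) Wᵀ =
      fromCols (1 : Matrix (Fin n) (Fin n) ℝ) W * Φ * (fromCols (1 : Matrix (Fin n) (Fin n) ℝ) W)ᵀ := by
    intro W
    rw [transpose_fromRows, transpose_fromCols]
    simp
  have hmat : fromCols (1 : Matrix (Fin n) (Fin n) ℝ) (fromCols A B) *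
        (fromBlocks 1 Xp (0 : Matrix (Fin n ⊕ Fin m) (Fin n) ℝ) (fromRows (-Xm) (-Um)) * Φ *
          (fromBlocks 1 Xp (0 : Matrix (Fin n ⊕ Fin m) (Fin n) ℝ) (fromRows (-Xm) (-Um)))ᵀ) *
        (fromCols (1 : Matrix (Fin n) (Fin n) ℝ) (fromCols A B))ᵀ =
      fromCols (1 : Matrix (Fin n) (Fin n) ℝ) (Xp - A * Xm - B * Um) * Φ *
        (fromCols (1 : Matrix (Fin n) (Fin n) ℝ) (Xp - A * Xm - B * Um))ᵀ := by
    rw [← Matrix.mul_assoc, ← Matrix.mul_assoc, key_mul, Matrix.mul_assoc, Matrix.mul_assoc,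
      ← Matrix.transpose_mul, key_mul, ← Matrix.mul_assoc]
  constructor
  · rintro ⟨W, hW, hpsd⟩
    have : W = Xp - A * Xm - B * Um := by rw [hW]; abel
    rw [hmat, ← this, ← hrw]
    exact hpsd
  · intro h
    refine ⟨Xp - A * Xm - B * Um, by abel, ?_⟩
    show ((fromRows (1 : Matrix (Fin n) (Fin n) ℝ) (Xp - A * Xm - B * Um)ᵀ)ᵀ * Φ *
      fromRows (1 : Matrix (Fin n) (Fin n) ℝ) (Xp - A * Xm - B * Um)ᵀ).PosSemidef
    rw [hrw]
    rw [hmat] at h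
    exact h
end

section
/- For real matrices A ∈ ℝ^{q×p} and B ∈ ℝ^{r×p}, the inequality AᵀA ⪰ BᵀB holds if and only if there exists a matrix M ∈ ℝ^{r×q} such that B = M A and MᵀM ⪯ I_q. -/
open Matrix


lemma norm_sq_eq_dot (n : ℕ) (y : EuclideanSpace ℝ (Fin n)) :
    ‖y‖^2 = (WithLp.equiv 2 (Fin n → ℝ) y) ⬝ᵥ (WithLp.equiv 2 (Fin n → ℝ) y) := by
  rw [← real_inner_self_eq_norm_sq]
  simp [PiLp.inner_apply, dotProduct, WithLp.equiv]
  rw [EuclideanSpace.norm_eq, Real.sq_sqrt (Finset.sum_nonneg fun i _ => sq_nonneg _)]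
  simp [sq]

lemma dot_quad (p m : ℕ) (C : Matrix (Fin m) (Fin p) ℝ) (x : Fin p → ℝ) :
    x ⬝ᵥ (Cᵀ * C) *ᵥ x = (C *ᵥ x) ⬝ᵥ (C *ᵥ x) := by
  rw [← mulVec_mulVec, dotProduct_mulVec, vecMul_transpose]

-- norm of toEuclideanLin in terms of mulVec
lemma norm_lin (p m : ℕ) (C : Matrix (Fin m) (Fin p) ℝ) (x : EuclideanSpace ℝ (Fin p)) :
    ‖Matrix.toEuclideanLin C x‖^2 = (C *ᵥ (WithLp.equiv 2 (Fin p → ℝ) x)) ⬝ᵥ (C *ᵥ (WithLp.equiv 2 (Fin p → ℝ) x)) := by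
  rw [norm_sq_eq_dot]; rfl

lemma psd_sub_iff (p m s : ℕ) (C : Matrix (Fin m) (Fin p) ℝ) (D : Matrix (Fin s) (Fin p) ℝ) :
    (Cᵀ * C - Dᵀ * D).PosSemidef ↔
      ∀ x : EuclideanSpace ℝ (Fin p),
        ‖Matrix.toEuclideanLin D x‖ ≤ ‖Matrix.toEuclideanLin C x‖ := by
  constructor
  · intro h x
    have h2 := h.dotProduct_mulVec_nonneg (WithLp.equiv 2 (Fin p → ℝ) x)
    rw [star_trivial, sub_mulVec, dotProduct_sub, dot_quad, dot_quad, ← norm_lin, ← norm_lin,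
      sub_nonneg] at h2
    exact le_of_pow_le_pow_left₀ two_ne_zero (norm_nonneg _) h2
  · intro h
    refine Matrix.PosSemidef.of_dotProduct_mulVec_nonneg ?_ ?_
    · apply IsHermitian.sub
      · simpa using (isHermitian_conjTranspose_mul_self C)
      · simpa using (isHermitian_conjTranspose_mul_self D)
    · intro x
      rw [star_trivial, sub_mulVec, dotProduct_sub, dot_quad, dot_quad, sub_nonneg]
      have := h ((WithLp.equiv 2 (Fin p → ℝ)).symm x)
      have h2 : ‖Matrix.toEuclideanLin D ((WithLp.equiv 2 (Fin p → ℝ)).symm x)‖^2 ≤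
          ‖Matrix.toEuclideanLin C ((WithLp.equiv 2 (Fin p → ℝ)).symm x)‖^2 :=
        pow_le_pow_left₀ (norm_nonneg _) this 2
      rwa [norm_lin, norm_lin, Equiv.apply_symm_apply] at h2

lemma lin_mul (a b c : ℕ) (M : Matrix (Fin a) (Fin b) ℝ) (A : Matrix (Fin b) (Fin c) ℝ) :
    Matrix.toEuclideanLin (M * A) =
      (Matrix.toEuclideanLin M).comp (Matrix.toEuclideanLin A) := by
  ext x
  simp [Matrix.toEuclideanLin_apply, Matrix.mulVec_mulVec]

lemma exists_contraction (p q r : ℕ)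
    (A : Matrix (Fin q) (Fin p) ℝ) (B : Matrix (Fin r) (Fin p) ℝ)
    (h : ∀ x : EuclideanSpace ℝ (Fin p),
      ‖Matrix.toEuclideanLin B x‖ ≤ ‖Matrix.toEuclideanLin A x‖) :
    ∃ M : Matrix (Fin r) (Fin q) ℝ, B = M * A ∧
      ∀ y : EuclideanSpace ℝ (Fin q), ‖Matrix.toEuclideanLin M y‖ ≤ ‖y‖ := by
  set f := Matrix.toEuclideanLin A with hf
  set g := Matrix.toEuclideanLin B with hg
  have hker : LinearMap.ker f ≤ LinearMap.ker g := by
    intro x hx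
    rw [LinearMap.mem_ker] at hx ⊢
    have := h x
    rw [hx, norm_zero] at this
    exact norm_le_zero_iff.mp this
  set V := LinearMap.range f with hV
  let e := f.quotKerEquivRange
  let g' := Submodule.liftQ (LinearMap.ker f) g hker
  let proj : EuclideanSpace ℝ (Fin q) →ₗ[ℝ] V := (V.orthogonalProjectionOnto).toLinearMap
  let m : EuclideanSpace ℝ (Fin q) →ₗ[ℝ] EuclideanSpace ℝ (Fin r) :=
    g' ∘ₗ (e.symm.toLinearMap ∘ₗ proj)
  refine ⟨Matrix.toEuclideanLin.symm m, ?_, ?_⟩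
  · have key : g = m ∘ₗ f := by
      ext x
      have hmem : f x ∈ V := LinearMap.mem_range_self f x
      have hproj : proj (f x) = ⟨f x, hmem⟩ := by
        apply Subtype.ext
        exact V.starProjection_eq_self_iff.mpr hmem
      simp only [LinearMap.comp_apply, m]
      rw [hproj]
      have := f.quotKerEquivRange_symm_apply_image x hmem
      simp only [LinearEquiv.coe_coe, e, this]
      simp [g', Submodule.liftQ_apply]
    apply Matrix.toEuclideanLin.injective
    rw [lin_mul, Matrix.toEuclideanLin.apply_symm_apply, ← hf, ← hg, key]
  · intro y
    rw [Matrix.toEuclideanLin.apply_symm_apply]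
    set u := V.orthogonalProjectionOnto y with hu
    obtain ⟨x, hx⟩ := u.2
    have hu2 : u = ⟨f x, LinearMap.mem_range_self f x⟩ := Subtype.ext hx.symm
    have hm : m y = g x := by
      simp only [LinearMap.comp_apply, m]
      show g' (e.symm (proj y)) = g x
      have : proj y = u := rfl
      rw [this, hu2, f.quotKerEquivRange_symm_apply_image x]
      simp [g', Submodule.liftQ_apply]
    rw [hm]
    calc ‖g x‖ ≤ ‖f x‖ := h x
      _ = ‖(u : EuclideanSpace ℝ (Fin q))‖ := by rw [hx]
      _ ≤ ‖y‖ := by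
          have h1 := (V.orthogonalProjectionOnto).le_opNorm y
          have h2 := Submodule.orthogonalProjectionOnto_norm_le V
          calc ‖(u : EuclideanSpace ℝ (Fin q))‖ = ‖u‖ := rfl
            _ ≤ ‖V.orthogonalProjectionOnto‖ * ‖y‖ := h1
            _ ≤ 1 * ‖y‖ := by
                exact mul_le_mul_of_nonneg_right h2 (norm_nonneg y)
            _ = ‖y‖ := one_mul _

lemma lin_one (n : ℕ) (y : EuclideanSpace ℝ (Fin n)) :
    Matrix.toEuclideanLin (1 : Matrix (Fin n) (Fin n) ℝ) y = y := by
  simp [Matrix.toEuclideanLin_apply]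

lemma contraction_iff (q r : ℕ) (M : Matrix (Fin r) (Fin q) ℝ) :
    ((1 : Matrix (Fin q) (Fin q) ℝ) - Mᵀ * M).PosSemidef ↔
      ∀ y : EuclideanSpace ℝ (Fin q), ‖Matrix.toEuclideanLin M y‖ ≤ ‖y‖ := by
  have h1 : (1 : Matrix (Fin q) (Fin q) ℝ) = 1ᵀ * 1 := by simp
  rw [h1, psd_sub_iff]
  constructor
  · intro h y; simpa [lin_one] using h y
  · intro h y; simpa [lin_one] using h y

/-- Lemma A.1: `AᵀA ⪰ BᵀB` iff `B = M A` for some contraction `M` (i.e. `MᵀM ⪯ I`). -/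
theorem param_lemma (p q r : ℕ)
    (A : Matrix (Fin q) (Fin p) ℝ) (B : Matrix (Fin r) (Fin p) ℝ) :
    (Aᵀ * A - Bᵀ * B).PosSemidef ↔
    ∃ M : Matrix (Fin r) (Fin q) ℝ,
      B = M * A ∧ ((1 : Matrix (Fin q) (Fin q) ℝ) - Mᵀ * M).PosSemidef := by
  rw [psd_sub_iff]
  constructor
  · intro h
    obtain ⟨M, hMA, hM⟩ := exists_contraction p q r A B h
    exact ⟨M, hMA, (contraction_iff q r M).mpr hM⟩
  · rintro ⟨M, rfl, hM⟩ x
    have hc := (contraction_iff q r M).mp hM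
    rw [lin_mul]
    exact hc _
end

section
/- Let M, N ∈ ℝ^{(q+r)×(q+r)} be symmetric with M ∈ Π_{q,r}, and assume M₂₂ has at least one negative eigenvalue. Assume 𝒵_{q,r}(N) ⊆ 𝒵_{q,r}(M) and 𝒵_{q,r}(N) is nonempty. Then ker N₂₂ ⊆ ker N₁₂, i.e., for every x ∈ ℝ^r, N₂₂ x = 0 implies N₁₂ x = 0. -/
open Matrix

private lemma aux_poly (e f g : ℝ) (hg : g < 0)
    (h : ∀ β : ℝ, 0 ≤ β → 0 ≤ e + β * f + β ^ 2 * g) : False := by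
  set β := max 1 ((|e| + |f| + 1) / (-g)) with hβdef
  have hβ1 : (1 : ℝ) ≤ β := le_max_left _ _
  have hβ0 : (0 : ℝ) ≤ β := by linarith
  have hg' : (0 : ℝ) < -g := by linarith
  have h3 : |e| + |f| + 1 ≤ β * (-g) := by
    have h2 : (|e| + |f| + 1) / (-g) ≤ β := le_max_right _ _
    rw [div_le_iff₀ hg'] at h2; linarith
  have h4 := h β hβ0
  have h5 := mul_le_mul_of_nonneg_left h3 hβ0
  have h6 := mul_le_mul_of_nonneg_left (le_abs_self f) hβ0
  have h7 := mul_nonneg (sub_nonneg.mpr hβ1) (abs_nonneg e)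
  nlinarith [le_abs_self e]

private lemma vecMulVec_mulVec' {m n : Type*} [Fintype n] (x : m → ℝ) (w v : n → ℝ) :
    vecMulVec x w *ᵥ v = (w ⬝ᵥ v) • x := by
  ext i
  simp only [mulVec, dotProduct, vecMulVec_apply, Pi.smul_apply, smul_eq_mul, Finset.sum_mul]
  exact Finset.sum_congr rfl fun j _ => by ring

private lemma symm_flip {n : Type*} [Fintype n] {P : Matrix n n ℝ} (hP : P.IsSymm) (a b : n → ℝ) :
    a ⬝ᵥ P *ᵥ b = b ⬝ᵥ P *ᵥ a := by
  rw [dotProduct_mulVec, ← mulVec_transpose, hP.eq, dotProduct_comm]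

private lemma expand_quad {n : Type*} [Fintype n] {P : Matrix n n ℝ} (hP : P.IsSymm)
    (v0 a b : n → ℝ) (s t : ℝ) :
    (v0 + s • a + t • b) ⬝ᵥ P *ᵥ (v0 + s • a + t • b) =
      v0 ⬝ᵥ P *ᵥ v0 + 2 * s * (v0 ⬝ᵥ P *ᵥ a) + 2 * t * (v0 ⬝ᵥ P *ᵥ b)
        + s ^ 2 * (a ⬝ᵥ P *ᵥ a) + 2 * (s * t) * (a ⬝ᵥ P *ᵥ b) + t ^ 2 * (b ⬝ᵥ P *ᵥ b) := by
  simp only [mulVec_add, mulVec_smul, dotProduct_add, add_dotProduct, dotProduct_smul,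
    smul_dotProduct, smul_eq_mul]
  rw [symm_flip hP a v0, symm_flip hP b v0, symm_flip hP b a]
  ring

private lemma mulVec_elim0 {q r : ℕ} (P : Matrix (Fin q ⊕ Fin r) (Fin q ⊕ Fin r) ℝ)
    (x : Fin r → ℝ) :
    P *ᵥ Sum.elim (0 : Fin q → ℝ) x = Sum.elim (P.toBlocks₁₂ *ᵥ x) (P.toBlocks₂₂ *ᵥ x) := by
  conv_lhs => rw [← fromBlocks_toBlocks P]
  rw [fromBlocks_mulVec]
  simp

private lemma quad_of_psd {q r : ℕ} {P : Matrix (Fin q ⊕ Fin r) (Fin q ⊕ Fin r) ℝ}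
    {Z : Matrix (Fin r) (Fin q) ℝ}
    (h : ((fromRows (1 : Matrix (Fin q) (Fin q) ℝ) Z)ᵀ * P * fromRows (1 : Matrix (Fin q) (Fin q) ℝ) Z).PosSemidef) (z : Fin q → ℝ) :
    0 ≤ Sum.elim z (Z *ᵥ z) ⬝ᵥ P *ᵥ Sum.elim z (Z *ᵥ z) := by
  have h2 := h.dotProduct_mulVec_nonneg z
  rwa [star_trivial, ← mulVec_mulVec, ← mulVec_mulVec, dotProduct_mulVec, vecMul_transpose,
    fromRows_mulVec, one_mulVec] at h2

private lemma psd_of_quad {q r : ℕ} {P : Matrix (Fin q ⊕ Fin r) (Fin q ⊕ Fin r) ℝ}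
    (hP : P.IsSymm) (Z : Matrix (Fin r) (Fin q) ℝ)
    (h : ∀ z : Fin q → ℝ, 0 ≤ Sum.elim z (Z *ᵥ z) ⬝ᵥ P *ᵥ Sum.elim z (Z *ᵥ z)) :
    ((fromRows (1 : Matrix (Fin q) (Fin q) ℝ) Z)ᵀ * P * fromRows (1 : Matrix (Fin q) (Fin q) ℝ) Z).PosSemidef := by
  refine PosSemidef.of_dotProduct_mulVec_nonneg ?_ ?_
  · show _ᴴ = _
    rw [conjTranspose_eq_transpose_of_trivial, transpose_mul, transpose_mul, transpose_transpose,
      hP.eq, Matrix.mul_assoc]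
  · intro z
    show (0 : ℝ) ≤ star z ⬝ᵥ _
    rw [star_trivial, ← mulVec_mulVec, ← mulVec_mulVec, dotProduct_mulVec, vecMul_transpose,
      fromRows_mulVec, one_mulVec]
    exact h z

private lemma elim_mulVec_decomp {q r : ℕ} (Z0 : Matrix (Fin r) (Fin q) ℝ) (x y : Fin r → ℝ)
    (w : Fin q → ℝ) (β : ℝ) (u z : Fin q → ℝ) :
    Sum.elim z ((Z0 + vecMulVec x w + β • vecMulVec y u) *ᵥ z)
      = Sum.elim z (Z0 *ᵥ z) + (w ⬝ᵥ z) • Sum.elim (0 : Fin q → ℝ) x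
        + (β * (u ⬝ᵥ z)) • Sum.elim (0 : Fin q → ℝ) y := by
  have hZv : (Z0 + vecMulVec x w + β • vecMulVec y u) *ᵥ z
      = Z0 *ᵥ z + (w ⬝ᵥ z) • x + (β * (u ⬝ᵥ z)) • y := by
    rw [add_mulVec, add_mulVec, vecMulVec_mulVec', smul_mulVec, vecMulVec_mulVec',
      smul_smul]
  rw [hZv]
  funext i
  cases i <;> simp

/-- The key family: perturbations of a point of `𝒵(N)` staying inside `𝒵(N)`. -/
private lemma Nside {q r : ℕ} {N : Matrix (Fin q ⊕ Fin r) (Fin q ⊕ Fin r) ℝ} (hN : N.IsSymm)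
    {Z0 : Matrix (Fin r) (Fin q) ℝ}
    (hZ0 : ((fromRows (1 : Matrix (Fin q) (Fin q) ℝ) Z0)ᵀ * N * fromRows (1 : Matrix (Fin q) (Fin q) ℝ) Z0).PosSemidef)
    {x : Fin r → ℝ} (hx : N.toBlocks₂₂ *ᵥ x = 0) (y : Fin r → ℝ) (α β : ℝ)
    (hαβ : 0 ≤ 2 * α + β ^ 2 * (y ⬝ᵥ N.toBlocks₂₂ *ᵥ y)) :
    ((fromRows (1 : Matrix (Fin q) (Fin q) ℝ) (Z0 + vecMulVec x (α • (N.toBlocks₁₂ *ᵥ x)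
          - β • (N.toBlocks₁₂ *ᵥ y + Z0ᵀ *ᵥ (N.toBlocks₂₂ *ᵥ y)))
        + β • vecMulVec y (N.toBlocks₁₂ *ᵥ x)))ᵀ * N *
      fromRows (1 : Matrix (Fin q) (Fin q) ℝ) (Z0 + vecMulVec x (α • (N.toBlocks₁₂ *ᵥ x)
          - β • (N.toBlocks₁₂ *ᵥ y + Z0ᵀ *ᵥ (N.toBlocks₂₂ *ᵥ y)))
        + β • vecMulVec y (N.toBlocks₁₂ *ᵥ x))).PosSemidef := by
  set u := N.toBlocks₁₂ *ᵥ x with hu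
  set c := N.toBlocks₁₂ *ᵥ y + Z0ᵀ *ᵥ (N.toBlocks₂₂ *ᵥ y) with hc
  set w := α • u - β • c with hw
  apply psd_of_quad hN
  intro z
  rw [elim_mulVec_decomp, expand_quad hN]
  have hNx : N *ᵥ Sum.elim (0 : Fin q → ℝ) x = Sum.elim u 0 := by
    rw [mulVec_elim0, hx]
  have hNy : N *ᵥ Sum.elim (0 : Fin q → ℝ) y
      = Sum.elim (N.toBlocks₁₂ *ᵥ y) (N.toBlocks₂₂ *ᵥ y) := mulVec_elim0 _ _
  have t2 : Sum.elim z (Z0 *ᵥ z) ⬝ᵥ N *ᵥ Sum.elim (0 : Fin q → ℝ) x = u ⬝ᵥ z := by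
    rw [hNx, sumElim_dotProduct_sumElim, dotProduct_zero, add_zero, dotProduct_comm]
  have t3 : Sum.elim z (Z0 *ᵥ z) ⬝ᵥ N *ᵥ Sum.elim (0 : Fin q → ℝ) y = c ⬝ᵥ z := by
    rw [hNy, sumElim_dotProduct_sumElim]
    have h2 : (Z0 *ᵥ z) ⬝ᵥ (N.toBlocks₂₂ *ᵥ y) = (Z0ᵀ *ᵥ (N.toBlocks₂₂ *ᵥ y)) ⬝ᵥ z := by
      rw [dotProduct_comm, dotProduct_mulVec, ← mulVec_transpose, dotProduct_comm]
    rw [h2, hc, add_dotProduct, dotProduct_comm z]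
  have t4 : Sum.elim (0 : Fin q → ℝ) x ⬝ᵥ N *ᵥ Sum.elim (0 : Fin q → ℝ) x = 0 := by
    rw [hNx, sumElim_dotProduct_sumElim]; simp
  have t5 : Sum.elim (0 : Fin q → ℝ) x ⬝ᵥ N *ᵥ Sum.elim (0 : Fin q → ℝ) y = 0 := by
    rw [symm_flip hN, hNx, sumElim_dotProduct_sumElim]; simp
  have t6 : Sum.elim (0 : Fin q → ℝ) y ⬝ᵥ N *ᵥ Sum.elim (0 : Fin q → ℝ) y
      = y ⬝ᵥ N.toBlocks₂₂ *ᵥ y := by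
    rw [hNy, sumElim_dotProduct_sumElim]; simp
  rw [t2, t3, t4, t5, t6]
  have hws : w ⬝ᵥ z = α * (u ⬝ᵥ z) - β * (c ⬝ᵥ z) := by
    rw [hw, sub_dotProduct, smul_dotProduct, smul_dotProduct, smul_eq_mul, smul_eq_mul]
  rw [hws]
  have h0 := quad_of_psd hZ0 z
  nlinarith [mul_nonneg hαβ (sq_nonneg (u ⬝ᵥ z)), h0]

/-- Step 3 of Lemma 3: ker N₂₂ ⊆ ker N₁₂. -/
theorem kerN22_subset_kerN12 (q r : ℕ)
    (M N : Matrix (Fin q ⊕ Fin r) (Fin q ⊕ Fin r) ℝ)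
    (hM : M.IsSymm) (hN : N.IsSymm)
    -- M ∈ Π_{q,r}:
    (M22d : Matrix (Fin r) (Fin r) ℝ)
    (hMMP : IsMoorePenroseInv M.toBlocks₂₂ M22d)
    (hM22 : (-(M.toBlocks₂₂)).PosSemidef)
    (hMker : ∀ x : Fin r → ℝ, M.toBlocks₂₂ *ᵥ x = 0 → M.toBlocks₁₂ *ᵥ x = 0)
    (hMSchur : (M.toBlocks₁₁ - M.toBlocks₁₂ * M22d * M.toBlocks₂₁).PosSemidef)
    (hIncl : ∀ Z : Matrix (Fin r) (Fin q) ℝ,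
      ((fromRows (1 : Matrix (Fin q) (Fin q) ℝ) Z)ᵀ * N * fromRows 1 Z).PosSemidef →
      ((fromRows (1 : Matrix (Fin q) (Fin q) ℝ) Z)ᵀ * M * fromRows 1 Z).PosSemidef)
    (hNonempty : ∃ Z : Matrix (Fin r) (Fin q) ℝ,
      ((fromRows (1 : Matrix (Fin q) (Fin q) ℝ) Z)ᵀ * N * fromRows 1 Z).PosSemidef)
    -- M₂₂ has at least one negative eigenvalue:
    (hNegEig : ∃ x : Fin r → ℝ, x ⬝ᵥ M.toBlocks₂₂ *ᵥ x < 0) :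
    ∀ x : Fin r → ℝ, N.toBlocks₂₂ *ᵥ x = 0 → N.toBlocks₁₂ *ᵥ x = 0 := by
  intro x hx
  by_contra hu0
  obtain ⟨Z0, hZ0⟩ := hNonempty
  set u := N.toBlocks₁₂ *ᵥ x with hu
  have hupos : 0 < u ⬝ᵥ u := by
    rcases lt_or_eq_of_le (Finset.sum_nonneg fun i _ => mul_self_nonneg (u i) :
        (0 : ℝ) ≤ u ⬝ᵥ u) with h | h
    · exact h
    · exact absurd (dotProduct_self_eq_zero.mp h.symm) hu0
  have hxM_le : x ⬝ᵥ M.toBlocks₂₂ *ᵥ x ≤ 0 := by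
    have h2 := hM22.dotProduct_mulVec_nonneg x
    rw [star_trivial, neg_mulVec, dotProduct_neg] at h2
    linarith
  rcases lt_or_eq_of_le hxM_le with hlt | heq
  · -- Case a : x ⬝ᵥ M₂₂ x < 0
    refine aux_poly (Sum.elim u (Z0 *ᵥ u) ⬝ᵥ M *ᵥ Sum.elim u (Z0 *ᵥ u))
      (2 * (u ⬝ᵥ u) * (Sum.elim u (Z0 *ᵥ u) ⬝ᵥ M *ᵥ Sum.elim (0 : Fin q → ℝ) x))
      ((u ⬝ᵥ u) ^ 2 * (x ⬝ᵥ M.toBlocks₂₂ *ᵥ x))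
      (mul_neg_of_pos_of_neg (pow_pos hupos 2) hlt) ?_
    intro α hα
    have hpsdN := Nside hN hZ0 hx x α 0 (by rw [hx]; simp; linarith)
    have hq := quad_of_psd (hIncl _ hpsdN) u
    rw [elim_mulVec_decomp, expand_quad hM] at hq
    have hws : (α • u - (0:ℝ) • (N.toBlocks₁₂ *ᵥ x + Z0ᵀ *ᵥ (N.toBlocks₂₂ *ᵥ x))) ⬝ᵥ u
        = α * (u ⬝ᵥ u) := by
      rw [sub_dotProduct, smul_dotProduct, smul_dotProduct, smul_eq_mul, smul_eq_mul]
      ring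
    rw [hws] at hq
    have e4 : Sum.elim (0 : Fin q → ℝ) x ⬝ᵥ M *ᵥ Sum.elim (0 : Fin q → ℝ) x
        = x ⬝ᵥ M.toBlocks₂₂ *ᵥ x := by
      rw [mulVec_elim0, sumElim_dotProduct_sumElim]; simp
    rw [e4] at hq
    linarith [hq]
  · -- Case b : x ⬝ᵥ M₂₂ x = 0, hence M₂₂ x = 0 and M₁₂ x = 0
    have hM22x : M.toBlocks₂₂ *ᵥ x = 0 := by
      have h2 := (hM22.dotProduct_mulVec_zero_iff x).mp (by
        rw [star_trivial, neg_mulVec, dotProduct_neg, heq, neg_zero])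
      rw [neg_mulVec, neg_eq_zero] at h2
      exact h2
    have hM12x := hMker x hM22x
    have hMxe : M *ᵥ Sum.elim (0 : Fin q → ℝ) x = 0 := by
      rw [mulVec_elim0, hM12x, hM22x]
      funext i; cases i <;> rfl
    obtain ⟨y, hy⟩ := hNegEig
    refine aux_poly (Sum.elim u (Z0 *ᵥ u) ⬝ᵥ M *ᵥ Sum.elim u (Z0 *ᵥ u))
      (2 * (u ⬝ᵥ u) * (Sum.elim u (Z0 *ᵥ u) ⬝ᵥ M *ᵥ Sum.elim (0 : Fin q → ℝ) y))
      ((u ⬝ᵥ u) ^ 2 * (y ⬝ᵥ M.toBlocks₂₂ *ᵥ y))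
      (mul_neg_of_pos_of_neg (pow_pos hupos 2) hy) ?_
    intro β hβ
    set ny := y ⬝ᵥ N.toBlocks₂₂ *ᵥ y with hny
    have hαβ : 0 ≤ 2 * (β ^ 2 * (|ny| + 1) / 2) + β ^ 2 * ny := by
      nlinarith [neg_abs_le ny, sq_nonneg β, abs_nonneg ny]
    have hpsdN := Nside hN hZ0 hx y (β ^ 2 * (|ny| + 1) / 2) β hαβ
    have hq := quad_of_psd (hIncl _ hpsdN) u
    rw [elim_mulVec_decomp, expand_quad hM] at hq
    have e2 : Sum.elim u (Z0 *ᵥ u) ⬝ᵥ M *ᵥ Sum.elim (0 : Fin q → ℝ) x = 0 := by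
      rw [hMxe, dotProduct_zero]
    have e4 : Sum.elim (0 : Fin q → ℝ) x ⬝ᵥ M *ᵥ Sum.elim (0 : Fin q → ℝ) x = 0 := by
      rw [hMxe, dotProduct_zero]
    have e5 : Sum.elim (0 : Fin q → ℝ) x ⬝ᵥ M *ᵥ Sum.elim (0 : Fin q → ℝ) y = 0 := by
      rw [symm_flip hM, hMxe, dotProduct_zero]
    have e6 : Sum.elim (0 : Fin q → ℝ) y ⬝ᵥ M *ᵥ Sum.elim (0 : Fin q → ℝ) y
        = y ⬝ᵥ M.toBlocks₂₂ *ᵥ y := by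
      rw [mulVec_elim0, sumElim_dotProduct_sumElim]; simp
    rw [e2, e4, e5, e6] at hq
    linarith [hq]
end

section
/- Let Φ̂ ∈ Π_{p,T} with blocks Φ̂₁₁ ∈ ℝ^{p×p}, Φ̂₁₂ ∈ ℝ^{p×T}, Φ̂₂₂ ∈ ℝ^{T×T}. Let Q̂ ∈ ℝ^{p×p} and R ∈ ℝ^{T×T} be matrices with Q̂ Q̂ᵀ = Φ̂₁₁ − Φ̂₁₂ Φ̂₂₂† Φ̂₂₁ and R Rᵀ = −Φ̂₂₂, and let Δ̂_c := −Φ̂₁₂ Φ̂₂₂† ∈ ℝ^{p×T}. Then for Δ̂ ∈ ℝ^{p×T}, the QMI [I_p; Δ̂ᵀ]ᵀ Φ̂ [I_p; Δ̂ᵀ] ⪰ 0 holds if and only if there exists M₁ ∈ ℝ^{p×T} such that (Δ̂ − Δ̂_c) R = Q̂ M₁ and M₁ M₁ᵀ ⪯ I_p. -/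
open Matrix

section Aux

variable {m n k : Type*} [Fintype m] [Fintype n] [Fintype k]
  [DecidableEq m] [DecidableEq n]

lemma real_conjTranspose_eq_transpose (A : Matrix m n ℝ) : Aᴴ = Aᵀ := by
  ext i j; simp [conjTranspose_apply]

lemma eq_zero_of_mulVec_eq_zero (A : Matrix m n ℝ) (h : ∀ x, A *ᵥ x = 0) :
    A = 0 := by
  ext i j
  have := congrFun (h (Pi.single j 1)) i
  simpa [mulVec_single] using this

lemma mul_transpose_self_eq_zero {A : Matrix m n ℝ} (h : A * Aᵀ = 0) : A = 0 := by
  have h2 : (Aᵀ)ᴴ * Aᵀ = 0 := by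
    rwa [real_conjTranspose_eq_transpose, transpose_transpose]
  have h3 := conjTranspose_mul_self_eq_zero.mp h2
  simpa using congrArg transpose h3

/-- Existence of a symmetric commuting weak pseudoinverse for a real symmetric matrix. -/
lemma exists_symm_pinv (S : Matrix n n ℝ) (hS : S.IsHermitian) :
    ∃ D : Matrix n n ℝ, Dᵀ = D ∧ S * D * S = S ∧ S * D = D * S := by
  classical
  set U : Matrix n n ℝ := (hS.eigenvectorUnitary : Matrix n n ℝ) with hU
  have hUU : star U * U = 1 := mem_unitaryGroup_iff'.mp hS.eigenvectorUnitary.2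
  set e : n → ℝ := hS.eigenvalues with he
  have hspec : S = U * diagonal e * star U := by
    have h := hS.spectral_theorem
    have h2 : (RCLike.ofReal ∘ hS.eigenvalues : n → ℝ) = e := funext fun i => rfl
    rwa [h2] at h
  have key : ∀ f g : n → ℝ,
      (U * diagonal f * star U) * (U * diagonal g * star U)
        = U * diagonal (fun i => f i * g i) * star U := by
    intro f g
    have h1 : U * diagonal f * star U * (U * diagonal g * star U)
        = U * (diagonal f * (star U * U) * diagonal g) * star U := by
      noncomm_ring
    rw [h1, hUU, mul_one, diagonal_mul_diagonal]
  have hstarU : star U = Uᵀ := real_conjTranspose_eq_transpose U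
  refine ⟨U * diagonal (fun i => (e i)⁻¹) * star U, ?_, ?_, ?_⟩
  · rw [hstarU, transpose_mul, transpose_mul, transpose_transpose,
      diagonal_transpose]
    noncomm_ring
  · rw [hspec, key, key]
    have hfun : (fun i => e i * (e i)⁻¹ * e i) = e := by
      funext i
      rcases eq_or_ne (e i) 0 with h0 | h0
      · simp [h0]
      · field_simp
    rw [hfun]
  · rw [hspec, key, key]
    have hfun : (fun i => e i * (e i)⁻¹) = (fun i => (e i)⁻¹ * e i) :=
      funext fun i => mul_comm _ _
    rw [hfun]

/-- Existence of a {1,3,4}-inverse for a real square matrix. -/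
lemma exists_g134 (Q : Matrix n n ℝ) :
    ∃ G : Matrix n n ℝ, Q * G * Q = Q ∧ (Q * G)ᵀ = Q * G ∧ (G * Q)ᵀ = G * Q := by
  have hS : (Q * Qᵀ).IsHermitian := by
    unfold Matrix.IsHermitian
    rw [real_conjTranspose_eq_transpose, transpose_mul, transpose_transpose]
  obtain ⟨D, hDt, hSDS, hSD⟩ := exists_symm_pinv (Q * Qᵀ) hS
  have hX : Q - Q * Qᵀ * D * Q = 0 := by
    apply mul_transpose_self_eq_zero
    have expand : (Q - Q * Qᵀ * D * Q) * (Q - Q * Qᵀ * D * Q)ᵀ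
        = Q * Qᵀ - Q * Qᵀ * Dᵀ * (Q * Qᵀ) - Q * Qᵀ * D * (Q * Qᵀ)
          + Q * Qᵀ * D * (Q * Qᵀ) * Dᵀ * (Q * Qᵀ) := by
      simp only [transpose_sub, transpose_mul, transpose_transpose]
      noncomm_ring
    rw [expand, hDt, hSDS, hSDS]
    abel
  have hQ' : Q * Qᵀ * D * Q = Q := (sub_eq_zero.mp hX).symm
  refine ⟨Qᵀ * D, ?_, ?_, ?_⟩
  · calc Q * (Qᵀ * D) * Q = Q * Qᵀ * D * Q := by noncomm_ring
    _ = Q := hQ'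
  · have hassoc : Q * (Qᵀ * D) = Q * Qᵀ * D := (mul_assoc _ _ _).symm
    rw [hassoc, transpose_mul, transpose_mul, transpose_transpose, hDt, hSD]
  · rw [transpose_mul, transpose_mul, transpose_transpose, hDt, mul_assoc]

/-- Douglas-type lemma: `QQᵀ − BBᵀ ⪰ 0` iff `B = QM` for some contraction `M`. -/
lemma douglas (Q : Matrix n n ℝ) (B : Matrix n m ℝ) :
    (Q * Qᵀ - B * Bᵀ).PosSemidef ↔
      ∃ M : Matrix n m ℝ, B = Q * M ∧ ((1 : Matrix n n ℝ) - M * Mᵀ).PosSemidef := by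
  constructor
  · intro hpsd
    obtain ⟨G, hG1, hG3, hG4⟩ := exists_g134 Q
    -- kernel inclusion
    have hker : ∀ x : n → ℝ, Qᵀ *ᵥ x = 0 → Bᵀ *ᵥ x = 0 := by
      intro x hx
      have h2 := hpsd.dotProduct_mulVec_nonneg x
      have e1 : x ⬝ᵥ ((Q * Qᵀ) *ᵥ x) = (Qᵀ *ᵥ x) ⬝ᵥ (Qᵀ *ᵥ x) := by
        rw [← mulVec_mulVec, dotProduct_mulVec, ← mulVec_transpose]
      have e2 : x ⬝ᵥ ((B * Bᵀ) *ᵥ x) = (Bᵀ *ᵥ x) ⬝ᵥ (Bᵀ *ᵥ x) := by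
        rw [← mulVec_mulVec, dotProduct_mulVec, ← mulVec_transpose]
      have hq : star x ⬝ᵥ ((Q * Qᵀ - B * Bᵀ) *ᵥ x)
          = (Qᵀ *ᵥ x) ⬝ᵥ (Qᵀ *ᵥ x) - (Bᵀ *ᵥ x) ⬝ᵥ (Bᵀ *ᵥ x) := by
        rw [star_trivial, sub_mulVec, dotProduct_sub, e1, e2]
      rw [hq, hx] at h2
      simp only [zero_dotProduct, zero_sub] at h2
      have hle : (Bᵀ *ᵥ x) ⬝ᵥ (Bᵀ *ᵥ x) ≤ 0 := by linarith [neg_nonneg.mp h2]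
      have hnn : 0 ≤ (Bᵀ *ᵥ x) ⬝ᵥ (Bᵀ *ᵥ x) :=
        Finset.sum_nonneg fun i _ => mul_self_nonneg _
      exact dotProduct_self_eq_zero.mp (le_antisymm hle hnn)
    -- Qᵀ * (Q * G) = Qᵀ
    have hQtQG : Qᵀ * (Q * G) = Qᵀ := by
      rw [← hG3, ← transpose_mul, hG1]
    -- Bᵀ * (Q * G) = Bᵀ
    have hBtQG : Bᵀ * (Q * G) = Bᵀ := by
      have hz : Bᵀ * (Q * G) - Bᵀ = 0 := by
        apply _root_.eq_zero_of_mulVec_eq_zero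
        intro x
        have hy : Qᵀ *ᵥ ((Q * G) *ᵥ x - x) = 0 := by
          rw [mulVec_sub, mulVec_mulVec, hQtQG, sub_self]
        have hb := hker _ hy
        rw [mulVec_sub, mulVec_mulVec] at hb
        rw [sub_mulVec]
        exact hb
      exact sub_eq_zero.mp hz
    have hQGB : Q * G * B = B := by
      have hc := congrArg transpose hBtQG
      rwa [transpose_mul, transpose_transpose, hG3] at hc
    refine ⟨G * B, by rw [← Matrix.mul_assoc, hQGB], ?_⟩
    set P := G * Q with hP
    have hPt : Pᵀ = P := hG4
    have hPP : P * P = P := by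
      rw [hP]
      calc G * Q * (G * Q) = G * (Q * G * Q) := by noncomm_ring
      _ = G * Q := by rw [hG1]
    have hQtGt : Qᵀ * Gᵀ = P := by rw [← transpose_mul, hG4]
    have e1 : G * (Q * Qᵀ) * Gᵀ = P := by
      calc G * (Q * Qᵀ) * Gᵀ = (G * Q) * (Qᵀ * Gᵀ) := by noncomm_ring
      _ = P * P := by rw [hQtGt, hP]
      _ = P := hPP
    have e2 : G * (B * Bᵀ) * Gᵀ = (G * B) * (G * B)ᵀ := by
      rw [transpose_mul, ← Matrix.mul_assoc, Matrix.mul_assoc]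
    have hexp : G * (Q * Qᵀ - B * Bᵀ) * Gᵀ
        = G * (Q * Qᵀ) * Gᵀ - G * (B * Bᵀ) * Gᵀ := by
      rw [Matrix.mul_sub, Matrix.sub_mul]
    have hid : (1 : Matrix n n ℝ) - (G * B) * (G * B)ᵀ
        = (1 - P) * (1 - P)ᵀ + G * (Q * Qᵀ - B * Bᵀ) * Gᵀ := by
      rw [hexp, e1, e2, transpose_sub, transpose_one, hPt]
      rw [show ((1 : Matrix n n ℝ) - P) * (1 - P) = 1 - P - P + P * P from by noncomm_ring,
        hPP]
      abel
    rw [hid]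
    apply Matrix.PosSemidef.add
    · have hps := posSemidef_self_mul_conjTranspose ((1 : Matrix n n ℝ) - P)
      rwa [real_conjTranspose_eq_transpose] at hps
    · have hps := hpsd.mul_mul_conjTranspose_same G
      rwa [real_conjTranspose_eq_transpose] at hps
  · rintro ⟨M, rfl, hM⟩
    have hid : Q * Qᵀ - Q * M * (Q * M)ᵀ = Q * (1 - M * Mᵀ) * Qᵀ := by
      have h1 : Q * M * (Q * M)ᵀ = Q * (M * Mᵀ) * Qᵀ := by
        rw [transpose_mul, ← Matrix.mul_assoc, Matrix.mul_assoc Q M Mᵀ]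
      rw [h1, Matrix.mul_sub, Matrix.sub_mul, Matrix.mul_one]
    rw [hid]
    have hps := hM.mul_mul_conjTranspose_same Q
    rwa [real_conjTranspose_eq_transpose] at hps

end Aux

/-- Parametrization of the noise QMI: `[I; Δ̂ᵀ]ᵀ Φ̂ [I; Δ̂ᵀ] ⪰ 0` iff
`(Δ̂ − Δ̂_c) R = Q̂ M₁` for some contraction `M₁`. -/
theorem noise_qmi_parametrization (p T : ℕ)
    (Φ : Matrix (Fin p ⊕ Fin T) (Fin p ⊕ Fin T) ℝ)
    (hΦ : Φ.IsSymm)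
    (Φ22d : Matrix (Fin T) (Fin T) ℝ)
    (hMP : IsMoorePenroseInv Φ.toBlocks₂₂ Φ22d)
    -- Φ̂ ∈ Π_{p,T}:
    (hΦ22 : (-(Φ.toBlocks₂₂)).PosSemidef)
    (hΦker : ∀ x : Fin T → ℝ, Φ.toBlocks₂₂ *ᵥ x = 0 → Φ.toBlocks₁₂ *ᵥ x = 0)
    (hΦSchur : (Φ.toBlocks₁₁ - Φ.toBlocks₁₂ * Φ22d * Φ.toBlocks₂₁).PosSemidef)
    (Q : Matrix (Fin p) (Fin p) ℝ)
    (hQ : Q * Qᵀ = Φ.toBlocks₁₁ - Φ.toBlocks₁₂ * Φ22d * Φ.toBlocks₂₁)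
    (R : Matrix (Fin T) (Fin T) ℝ)
    (hR : R * Rᵀ = -(Φ.toBlocks₂₂)) :
    ∀ Δ : Matrix (Fin p) (Fin T) ℝ,
      ((fromRows (1 : Matrix (Fin p) (Fin p) ℝ) Δᵀ)ᵀ * Φ * fromRows (1 : Matrix (Fin p) (Fin p) ℝ) Δᵀ).PosSemidef ↔
      ∃ M₁ : Matrix (Fin p) (Fin T) ℝ,
        (Δ - (-(Φ.toBlocks₁₂ * Φ22d))) * R = Q * M₁ ∧
        ((1 : Matrix (Fin p) (Fin p) ℝ) - M₁ * M₁ᵀ).PosSemidef := by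
  intro Δ
  obtain ⟨hMP1, hMP2, hMP3, hMP4⟩ := hMP
  set A11 := Φ.toBlocks₁₁ with hA11
  set A12 := Φ.toBlocks₁₂ with hA12
  set A21 := Φ.toBlocks₂₁ with hA21
  set A22 := Φ.toBlocks₂₂ with hA22
  -- symmetry facts
  have h21 : A21 = A12ᵀ := by
    ext i j
    have := congrFun (congrFun hΦ (Sum.inr i)) (Sum.inl j)
    simpa [Matrix.transpose_apply, hA21, hA12, Matrix.toBlocks₂₁, Matrix.toBlocks₁₂] using this.symm
  have h22 : A22ᵀ = A22 := by
    ext i j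
    have := congrFun (congrFun hΦ (Sum.inr i)) (Sum.inr j)
    simpa [Matrix.transpose_apply, hA22, Matrix.toBlocks₂₂] using this
  -- f1 : A12 * Φ22d * A22 = A12
  have f1 : A12 * Φ22d * A22 = A12 := by
    have hz : A12 * Φ22d * A22 - A12 = 0 := by
      apply _root_.eq_zero_of_mulVec_eq_zero
      intro x
      have hk : A22 *ᵥ ((Φ22d * A22) *ᵥ x - x) = 0 := by
        rw [mulVec_sub, mulVec_mulVec, ← mul_assoc, hMP1, sub_self]
      have := hΦker _ hk
      rw [mulVec_sub, mulVec_mulVec] at this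
      rw [sub_mulVec, Matrix.mul_assoc]
      exact this
    exact sub_eq_zero.mp hz
  -- f2 : A22 * Φ22dᵀ = Φ22d * A22
  have f2 : A22 * Φ22dᵀ = Φ22d * A22 := by
    calc A22 * Φ22dᵀ = (Φ22d * A22ᵀ)ᵀ := by rw [transpose_mul, transpose_transpose]
    _ = (Φ22d * A22)ᵀ := by rw [h22]
    _ = Φ22d * A22 := hMP4
  -- f3 : Φ22d * A22 * A21 = A21
  have f3 : Φ22d * A22 * A21 = A21 := by
    rw [h21, ← hMP4, ← transpose_mul, ← Matrix.mul_assoc, f1]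
  -- expansion of the QMI matrix
  have f3' : Φ22d * A22 * A12ᵀ = A12ᵀ := by rw [← h21]; exact f3
  set D := Δ + A12 * Φ22d with hD
  have hDt : Dᵀ = Δᵀ + Φ22dᵀ * A12ᵀ := by
    rw [hD, transpose_add, transpose_mul]
  have hDA : D * A22 = Δ * A22 + A12 := by
    rw [hD, Matrix.add_mul, f1]
  have t1 : Δ * A22 * (Φ22dᵀ * A12ᵀ) = Δ * A21 := by
    rw [Matrix.mul_assoc Δ A22 (Φ22dᵀ * A12ᵀ), ← Matrix.mul_assoc A22 Φ22dᵀ A12ᵀ,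
      f2, f3', ← h21]
  have hAd : A12 * Φ22dᵀ = A12 * Φ22d * (Φ22d * A22) := by
    conv_lhs => rw [← f1]
    rw [Matrix.mul_assoc (A12 * Φ22d) A22 Φ22dᵀ, f2]
  have t2 : A12 * (Φ22dᵀ * A12ᵀ) = A12 * Φ22d * A21 := by
    rw [← Matrix.mul_assoc A12 Φ22dᵀ A12ᵀ, hAd,
      Matrix.mul_assoc (A12 * Φ22d) (Φ22d * A22) A12ᵀ, f3', ← h21]
  have hDexp : D * A22 * Dᵀ = Δ * A22 * Δᵀ + Δ * A21 + A12 * Δᵀ + A12 * Φ22d * A21 := by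
    rw [hDA, hDt, Matrix.add_mul, Matrix.mul_add, Matrix.mul_add, t1, t2]
    abel
  have hRR : (D * R) * (D * R)ᵀ = -(D * A22 * Dᵀ) := by
    rw [transpose_mul, ← Matrix.mul_assoc (D * R) Rᵀ Dᵀ, Matrix.mul_assoc D R Rᵀ, hR,
      Matrix.mul_neg, Matrix.neg_mul]
  have hN : (fromRows (1 : Matrix (Fin p) (Fin p) ℝ) Δᵀ)ᵀ * Φ * fromRows (1 : Matrix (Fin p) (Fin p) ℝ) Δᵀ
      = Q * Qᵀ - (D * R) * (D * R)ᵀ := by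
    have hfr : (fromRows (1 : Matrix (Fin p) (Fin p) ℝ) Δᵀ)ᵀ = fromCols 1 Δ := by
      rw [transpose_fromRows, transpose_one, transpose_transpose]
    have hblocks : Φ = fromBlocks A11 A12 A21 A22 := (fromBlocks_toBlocks Φ).symm
    rw [hfr, hblocks, fromCols_mul_fromBlocks, fromCols_mul_fromRows,
      hRR, sub_neg_eq_add, hQ, hDexp]
    simp only [Matrix.one_mul, Matrix.mul_one, Matrix.add_mul]
    abel
  rw [hN, sub_neg_eq_add, ← hD]
  exact douglas Q (D * R)
end

section
/- Let Φ̂ ∈ Π_{p,T}, let Q̂ ∈ ℝ^{p×p} and R ∈ ℝ^{T×T} satisfy Q̂ Q̂ᵀ = Φ̂₁₁ − Φ̂₁₂ Φ̂₂₂† Φ̂₂₁ and R Rᵀ = −Φ̂₂₂, and set Δ̂_c := −Φ̂₁₂ Φ̂₂₂†, Q := E Q̂ ∈ ℝ^{(2n+m)×p}, and Δ_c := E Δ̂_c ∈ ℝ^{(2n+m)×T}. For (A,B) ∈ ℝ^{n×n} × ℝ^{n×m} with S := [I_n, A, B], the inequality S [E, 𝐗] Φ̂ [E, 𝐗]ᵀ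 Sᵀ ⪰ 0 holds if and only if there exists M₂ ∈ ℝ^{p×T} such that S(𝐗 − Δ_c) R = S Q M₂ and M₂ M₂ᵀ ⪯ I_p. -/
open Matrix

/- ### Auxiliary lemmas -/

lemma real_conjT {a b : Type*} (A : Matrix a b ℝ) : Aᴴ = Aᵀ := by
  ext i j; simp [conjTranspose_apply]

lemma mul_eq_zero_of_cols {a b c : Type*} [Fintype b] (A : Matrix a b ℝ) (B : Matrix b c ℝ)
    (h : ∀ j, A *ᵥ (fun i => B i j) = 0) : A * B = 0 := by
  ext i j
  simpa [Matrix.mul_apply, Matrix.mulVec, dotProduct] using congrFun (h j) i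

lemma col_of_mul {a b c : Type*} [Fintype b] (A : Matrix a b ℝ) (B : Matrix b c ℝ) (j : c) :
    A *ᵥ (fun i => B i j) = fun i => (A * B) i j := by
  ext i; simp [Matrix.mul_apply, Matrix.mulVec, dotProduct]

lemma mp_unique {m n : Type*} [Fintype m] [Fintype n] {A : Matrix m n ℝ} {B C : Matrix n m ℝ}
    (hB : IsMoorePenroseInv A B) (hC : IsMoorePenroseInv A C) : B = C := by
  obtain ⟨hB1, hB2, hB3, hB4⟩ := hB
  obtain ⟨hC1, hC2, hC3, hC4⟩ := hC
  have hAB : A * B = A * C := by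
    calc A * B = (A * B)ᵀ := hB3.symm
    _ = Bᵀ * Aᵀ := by rw [transpose_mul]
    _ = Bᵀ * (A * C * A)ᵀ := by rw [hC1]
    _ = Bᵀ * (Aᵀ * (A * C)ᵀ) := by rw [transpose_mul]
    _ = (Bᵀ * Aᵀ) * (A * C) := by rw [hC3]; simp only [Matrix.mul_assoc]
    _ = (A * B)ᵀ * (A * C) := by rw [transpose_mul]
    _ = A * B * (A * C) := by rw [hB3]
    _ = (A * B * A) * C := by simp only [Matrix.mul_assoc]
    _ = A * C := by rw [hB1]
  have hBA : B * A = C * A := by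
    calc B * A = (B * A)ᵀ := hB4.symm
    _ = Aᵀ * Bᵀ := by rw [transpose_mul]
    _ = (A * C * A)ᵀ * Bᵀ := by rw [hC1]
    _ = ((C * A)ᵀ * Aᵀ) * Bᵀ := by rw [transpose_mul, transpose_mul]; simp only [Matrix.mul_assoc, Matrix.transpose_mul]
    _ = (C * A) * (Aᵀ * Bᵀ) := by rw [hC4]; simp only [Matrix.mul_assoc]
    _ = (C * A) * (B * A)ᵀ := by rw [transpose_mul]
    _ = (C * A) * (B * A) := by rw [hB4]
    _ = C * (A * B * A) := by simp only [Matrix.mul_assoc]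
    _ = C * A := by rw [hB1]
  calc B = B * A * B := hB2.symm
  _ = B * (A * B) := by simp only [Matrix.mul_assoc]
  _ = B * (A * C) := by rw [hAB]
  _ = (B * A) * C := by simp only [Matrix.mul_assoc]
  _ = (C * A) * C := by rw [hBA]
  _ = C := hC2

lemma mp_transpose {m n : Type*} [Fintype m] [Fintype n] {A : Matrix m n ℝ} {B : Matrix n m ℝ}
    (hB : IsMoorePenroseInv A B) : IsMoorePenroseInv Aᵀ Bᵀ := by
  obtain ⟨h1, h2, h3, h4⟩ := hB
  refine ⟨?_, ?_, ?_, ?_⟩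
  · rw [← transpose_mul, ← transpose_mul, show A * (B * A) = A * B * A from (Matrix.mul_assoc A B A).symm, h1]
  · rw [← transpose_mul, ← transpose_mul, show B * (A * B) = B * A * B from (Matrix.mul_assoc B A B).symm, h2]
  · rw [← transpose_mul, transpose_transpose, h4]
  · rw [← transpose_mul, transpose_transpose, h3]

lemma mp_symm {n : Type*} [Fintype n] {A : Matrix n n ℝ} {B : Matrix n n ℝ}
    (hA : Aᵀ = A) (hB : IsMoorePenroseInv A B) : Bᵀ = B :=
  mp_unique (by simpa [hA] using mp_transpose hB) hB

/-- A symmetric pseudoinverse of a positive semidefinite real matrix, built from the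
spectral theorem. -/
lemma psd_pinv {n : Type*} [Fintype n] [DecidableEq n] {P : Matrix n n ℝ} (hP : P.PosSemidef) :
    ∃ K : Matrix n n ℝ, Kᵀ = K ∧ K * P * K = K ∧ (P * K)ᵀ = P * K ∧ P * P * K = P := by
  have hH := hP.1
  set U : Matrix n n ℝ := (hH.eigenvectorUnitary : Matrix n n ℝ) with hUdef
  set d : n → ℝ := hH.eigenvalues with hddef
  have hU1 : U * Uᵀ = 1 := by
    have := (Matrix.mem_unitaryGroup_iff).mp hH.eigenvectorUnitary.2
    rwa [← real_conjT U]
  have hU2 : Uᵀ * U = 1 := by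
    have := (Matrix.mem_unitaryGroup_iff').mp hH.eigenvectorUnitary.2
    rwa [← real_conjT U]
  have hspec : P = U * diagonal d * Uᵀ := by
    have := hH.spectral_theorem
    simpa [real_conjT, Matrix.star_eq_conjTranspose] using this
  have key : ∀ f g : n → ℝ, (U * diagonal f * Uᵀ) * (U * diagonal g * Uᵀ)
      = U * diagonal (fun i => f i * g i) * Uᵀ := by
    intro f g
    calc (U * diagonal f * Uᵀ) * (U * diagonal g * Uᵀ)
        = U * diagonal f * (Uᵀ * U) * diagonal g * Uᵀ := by
          simp only [Matrix.mul_assoc]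
      _ = U * (diagonal f * diagonal g) * Uᵀ := by rw [hU2]; simp only [Matrix.mul_assoc, Matrix.mul_one]
      _ = U * diagonal (fun i => f i * g i) * Uᵀ := by rw [diagonal_mul_diagonal]
  have symm : ∀ f : n → ℝ, (U * diagonal f * Uᵀ)ᵀ = U * diagonal f * Uᵀ := by
    intro f
    simp only [transpose_mul, transpose_transpose, diagonal_transpose, Matrix.mul_assoc]
  refine ⟨U * diagonal (fun i => (d i)⁻¹) * Uᵀ, symm _, ?_, ?_, ?_⟩
  · rw [hspec, key, key]
    congr 1
    congr 1
    rw [diagonal_eq_diagonal_iff]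
    intro i
    rcases eq_or_ne (d i) 0 with h | h
    · simp [h]
    · rw [inv_mul_cancel₀ h, one_mul]
  · rw [hspec, key, symm]
  · rw [hspec, key, key]
    congr 1
    congr 1
    rw [diagonal_eq_diagonal_iff]
    intro i
    rcases eq_or_ne (d i) 0 with h | h
    · simp [h]
    · rw [mul_assoc, mul_inv_cancel₀ h, mul_one]

/-- Douglas-type parametrization: `G Gᵀ ⪰ H Hᵀ` iff `H = G M` for some contraction `M`. -/
lemma contraction_param {q p T : Type*} [Fintype q] [Fintype p] [Fintype T]
    [DecidableEq q] [DecidableEq p]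
    (G : Matrix q p ℝ) (H : Matrix q T ℝ) :
    (G * Gᵀ - H * Hᵀ).PosSemidef ↔
      ∃ M : Matrix p T ℝ, H = G * M ∧ ((1 : Matrix p p ℝ) - M * Mᵀ).PosSemidef := by
  constructor
  · intro h
    have hPSD : (G * Gᵀ).PosSemidef := by
      have := posSemidef_self_mul_conjTranspose G; rwa [real_conjT] at this
    obtain ⟨K, hKsym, hKPK, hPKsym, hPPK⟩ := psd_pinv hPSD
    set M : Matrix p T ℝ := Gᵀ * K * H with hMdef
    have hcol : ∀ c : q → ℝ, (G * Gᵀ) *ᵥ c = 0 → Hᵀ *ᵥ c = 0 := by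
      intro c hc
      have h1 : 0 ≤ c ⬝ᵥ ((G * Gᵀ - H * Hᵀ) *ᵥ c) := by
        simpa using h.dotProduct_mulVec_nonneg c
      have h2 : c ⬝ᵥ ((G * Gᵀ) *ᵥ c) = 0 := by rw [hc]; simp
      have h3 : c ⬝ᵥ ((H * Hᵀ) *ᵥ c) = (Hᵀ *ᵥ c) ⬝ᵥ (Hᵀ *ᵥ c) := by
        rw [← mulVec_mulVec, dotProduct_mulVec, ← mulVec_transpose]
      have h4 : (Hᵀ *ᵥ c) ⬝ᵥ (Hᵀ *ᵥ c) = 0 := by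
        have h5 : 0 ≤ (Hᵀ *ᵥ c) ⬝ᵥ (Hᵀ *ᵥ c) := by
          simpa using dotProduct_star_self_nonneg (Hᵀ *ᵥ c)
        have h6 := h1
        rw [sub_mulVec, dotProduct_sub, h2, h3, zero_sub, le_neg, neg_zero] at h6
        linarith
      rwa [dotProduct_self_eq_zero] at h4
    have hz : (G * Gᵀ) * (1 - (G * Gᵀ) * K) = 0 := by
      rw [Matrix.mul_sub, Matrix.mul_one, ← Matrix.mul_assoc, hPPK, sub_self]
    have hHt : Hᵀ * (1 - (G * Gᵀ) * K) = 0 := by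
      apply mul_eq_zero_of_cols
      intro j
      apply hcol
      rw [col_of_mul, hz]
      rfl
    have hsym1 : (1 - (G * Gᵀ) * K)ᵀ = 1 - (G * Gᵀ) * K := by
      rw [transpose_sub, transpose_one, hPKsym]
    have hPrH : (1 - (G * Gᵀ) * K) * H = 0 := by
      have h7 := congrArg Matrix.transpose hHt
      rwa [transpose_mul, transpose_transpose, hsym1, transpose_zero] at h7
    have hGM : G * M = H := by
      have h8 : H - (G * Gᵀ) * K * H = 0 := by
        rw [← hPrH, Matrix.sub_mul, Matrix.one_mul]
      have h9 : (G * Gᵀ) * K * H = H := by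
        have := sub_eq_zero.mp h8
        exact this.symm
      have e4 : G * M = (G * Gᵀ) * K * H := by rw [hMdef]; simp only [Matrix.mul_assoc]
      rw [e4, h9]
    refine ⟨M, hGM.symm, ?_⟩
    set J : Matrix p p ℝ := Gᵀ * K * G with hJdef
    have hJsym : Jᵀ = J := by
      rw [hJdef, transpose_mul, transpose_mul, transpose_transpose, hKsym, Matrix.mul_assoc]
    have hJJ : J * J = J := by
      have e5 : Gᵀ * K * G * (Gᵀ * K * G) = Gᵀ * (K * (G * Gᵀ) * K) * G := by
        simp only [Matrix.mul_assoc]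
      rw [hJdef, e5, hKPK]
    have h1J : ((1 : Matrix p p ℝ) - J).PosSemidef := by
      have hee : ((1 : Matrix p p ℝ) - J) * ((1 : Matrix p p ℝ) - J) = 1 - J := by
        simp only [Matrix.sub_mul, Matrix.mul_sub, Matrix.one_mul, Matrix.mul_one, hJJ]
        abel
      have he : (1 : Matrix p p ℝ) - J = (1 - J) * (1 - J)ᴴ := by
        rw [real_conjT, transpose_sub, transpose_one, hJsym, hee]
      rw [he]
      exact posSemidef_self_mul_conjTranspose _
    have h2J : (J - M * Mᵀ).PosSemidef := by
      have h10 := h.mul_mul_conjTranspose_same (Gᵀ * K)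
      have eA : Gᵀ * K * (G * Gᵀ) * (K * G) = J := by
        have e3 : Gᵀ * K * (G * Gᵀ) * (K * G) = Gᵀ * (K * (G * Gᵀ) * K) * G := by
          simp only [Matrix.mul_assoc]
        rw [e3, hKPK, hJdef]
      have eB : Gᵀ * K * (H * Hᵀ) * (K * G) = M * Mᵀ := by
        rw [hMdef]
        simp only [transpose_mul, transpose_transpose, hKsym, Matrix.mul_assoc]
      have e2 : Gᵀ * K * (G * Gᵀ - H * Hᵀ) * (Gᵀ * K)ᴴ = J - M * Mᵀ := by
        rw [real_conjT, transpose_mul, transpose_transpose, hKsym, Matrix.mul_sub,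
          Matrix.sub_mul, eA, eB]
      rwa [e2] at h10
    have hfin : (1 : Matrix p p ℝ) - M * Mᵀ = (1 - J) + (J - M * Mᵀ) := by abel
    rw [hfin]
    exact h1J.add h2J
  · rintro ⟨M, hM, hc⟩
    have he : G * Gᵀ - H * Hᵀ = G * (1 - M * Mᵀ) * Gᴴ := by
      rw [real_conjT, hM, Matrix.mul_sub, Matrix.mul_one, Matrix.sub_mul, transpose_mul]
      simp only [Matrix.mul_assoc]
    rw [he]
    exact hc.mul_mul_conjTranspose_same G

/-- The core factorization identity for `[E, X] Φ [E, X]ᵀ`. -/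
lemma core_identity {N P T : Type*} [Fintype N] [Fintype P] [Fintype T]
    (E : Matrix N P ℝ) (X : Matrix N T ℝ)
    (B11 : Matrix P P ℝ) (B12 : Matrix P T ℝ) (B21 : Matrix T P ℝ) (B22 : Matrix T T ℝ)
    (Φ22d : Matrix T T ℝ) (Qh : Matrix P P ℝ) (R : Matrix T T ℝ)
    (hdsym : Φ22dᵀ = Φ22d) (h21 : B21 = B12ᵀ)
    (kker : B12 * Φ22d * B22 = B12)
    (h22d21 : B22 * Φ22d * B21 = B21)
    (hQh : Qh * Qhᵀ = B11 - B12 * Φ22d * B21)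
    (hR : R * Rᵀ = -B22) :
    fromCols E X * fromBlocks B11 B12 B21 B22 * (fromCols E X)ᵀ
      = (E * Qh) * (E * Qh)ᵀ
        - ((X - E * (-(B12 * Φ22d))) * R) * ((X - E * (-(B12 * Φ22d))) * R)ᵀ := by
  have hZ : fromCols E X * fromBlocks B11 B12 B21 B22 * (fromCols E X)ᵀ
      = E * B11 * Eᵀ + E * B12 * Xᵀ + X * B21 * Eᵀ + X * B22 * Xᵀ := by
    rw [transpose_fromCols, fromCols_mul_fromBlocks, fromCols_mul_fromRows,
      Matrix.add_mul, Matrix.add_mul]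
    abel
  have hD : X - E * (-(B12 * Φ22d)) = X + E * (B12 * Φ22d) := by
    rw [Matrix.mul_neg, sub_neg_eq_add]
  have t1 : (E * Qh) * (E * Qh)ᵀ = E * (B11 - B12 * Φ22d * B21) * Eᵀ := by
    have e0 : (E * Qh) * (Qhᵀ * Eᵀ) = E * (Qh * Qhᵀ) * Eᵀ := by simp only [Matrix.mul_assoc]
    rw [transpose_mul, e0, hQh]
  have e1 : (X + E * (B12 * Φ22d)) * B22 = X * B22 + E * B12 := by
    rw [Matrix.add_mul]
    congr 1
    have e7 : E * (B12 * Φ22d) * B22 = E * (B12 * Φ22d * B22) := by simp only [Matrix.mul_assoc]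
    rw [e7, kker]
  have e2 : (X + E * (B12 * Φ22d))ᵀ = Xᵀ + Φ22d * B21 * Eᵀ := by
    rw [transpose_add, transpose_mul, transpose_mul, hdsym, ← h21]
  have t4 : (X + E * (B12 * Φ22d)) * B22 * (X + E * (B12 * Φ22d))ᵀ
      = X * B22 * Xᵀ + E * B12 * Xᵀ + X * B21 * Eᵀ + E * (B12 * Φ22d * B21) * Eᵀ := by
    rw [e1, e2, Matrix.add_mul, Matrix.mul_add, Matrix.mul_add]
    have e3 : X * B22 * (Φ22d * B21 * Eᵀ) = X * B21 * Eᵀ := by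
      have e5 : X * B22 * (Φ22d * B21 * Eᵀ) = X * (B22 * Φ22d * B21) * Eᵀ := by
        simp only [Matrix.mul_assoc]
      rw [e5, h22d21]
    have e4 : E * B12 * (Φ22d * B21 * Eᵀ) = E * (B12 * Φ22d * B21) * Eᵀ := by
      simp only [Matrix.mul_assoc]
    rw [e3, e4]
    abel
  have t2 : ((X + E * (B12 * Φ22d)) * R) * ((X + E * (B12 * Φ22d)) * R)ᵀ
      = -((X + E * (B12 * Φ22d)) * B22 * (X + E * (B12 * Φ22d))ᵀ) := by
    have e6 : ((X + E * (B12 * Φ22d)) * R) * (Rᵀ * (X + E * (B12 * Φ22d))ᵀ)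
        = (X + E * (B12 * Φ22d)) * (R * Rᵀ) * (X + E * (B12 * Φ22d))ᵀ := by
      simp only [Matrix.mul_assoc]
    rw [transpose_mul, e6, hR, Matrix.mul_neg, Matrix.neg_mul]
  rw [hZ, hD, t1, t2, t4, sub_neg_eq_add, Matrix.mul_sub, Matrix.sub_mul]
  abel

/-- Parametrization of the system QMI: `S [E, 𝐗] Φ̂ [E, 𝐗]ᵀ Sᵀ ⪰ 0` iff
`S (𝐗 − Δ_c) R = S Q M₂` for some contraction `M₂`. -/
theorem system_qmi_parametrization (n m p T : ℕ)
    (Xp Xm : Matrix (Fin n) (Fin T) ℝ) (Um : Matrix (Fin m) (Fin T) ℝ)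
    (E : Matrix (Fin n ⊕ (Fin n ⊕ Fin m)) (Fin p) ℝ)
    (Φ : Matrix (Fin p ⊕ Fin T) (Fin p ⊕ Fin T) ℝ) (hΦ : Φ.IsSymm)
    -- Φ̂ ∈ Π_{p,T}:
    (Φ22d : Matrix (Fin T) (Fin T) ℝ)
    (hΦMP : IsMoorePenroseInv Φ.toBlocks₂₂ Φ22d)
    (hΦ22 : (-(Φ.toBlocks₂₂)).PosSemidef)
    (hΦker : ∀ x : Fin T → ℝ, Φ.toBlocks₂₂ *ᵥ x = 0 → Φ.toBlocks₁₂ *ᵥ x = 0)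
    (hΦSchur : (Φ.toBlocks₁₁ - Φ.toBlocks₁₂ * Φ22d * Φ.toBlocks₂₁).PosSemidef)
    (Qh : Matrix (Fin p) (Fin p) ℝ)
    (hQh : Qh * Qhᵀ = Φ.toBlocks₁₁ - Φ.toBlocks₁₂ * Φ22d * Φ.toBlocks₂₁)
    (R : Matrix (Fin T) (Fin T) ℝ)
    (hR : R * Rᵀ = -(Φ.toBlocks₂₂))
    (A : Matrix (Fin n) (Fin n) ℝ) (B : Matrix (Fin n) (Fin m) ℝ) :
    (rowS A B *
        (fromCols E (dataX Xp Xm Um) * Φ * (fromCols E (dataX Xp Xm Um))ᵀ) *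
        (rowS A B)ᵀ).PosSemidef ↔
    ∃ M₂ : Matrix (Fin p) (Fin T) ℝ,
      rowS A B * (dataX Xp Xm Um - E * (-(Φ.toBlocks₁₂ * Φ22d))) * R =
        rowS A B * (E * Qh) * M₂ ∧
      ((1 : Matrix (Fin p) (Fin p) ℝ) - M₂ * M₂ᵀ).PosSemidef := by
  classical
  have h21 : Φ.toBlocks₂₁ = (Φ.toBlocks₁₂)ᵀ := by
    ext i j
    exact hΦ.apply (Sum.inl j) (Sum.inr i)
  have h22s : (Φ.toBlocks₂₂)ᵀ = Φ.toBlocks₂₂ := by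
    ext i j
    exact hΦ.apply (Sum.inr i) (Sum.inr j)
  have hdsym : Φ22dᵀ = Φ22d := mp_symm h22s hΦMP
  have kker : Φ.toBlocks₁₂ * Φ22d * Φ.toBlocks₂₂ = Φ.toBlocks₁₂ := by
    have hzero : Φ.toBlocks₁₂ * (1 - Φ22d * Φ.toBlocks₂₂) = 0 := by
      apply mul_eq_zero_of_cols
      intro j
      apply hΦker
      rw [col_of_mul]
      have hz2 : Φ.toBlocks₂₂ * (1 - Φ22d * Φ.toBlocks₂₂) = 0 := by
        rw [Matrix.mul_sub, Matrix.mul_one, ← Matrix.mul_assoc, hΦMP.1, sub_self]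
      rw [hz2]
      rfl
    rw [Matrix.mul_sub, Matrix.mul_one, sub_eq_zero] at hzero
    rw [Matrix.mul_assoc]
    exact hzero.symm
  have h22d21 : Φ.toBlocks₂₂ * Φ22d * Φ.toBlocks₂₁ = Φ.toBlocks₂₁ := by
    have h7 := congrArg Matrix.transpose kker
    rw [transpose_mul, transpose_mul, h22s, hdsym] at h7
    rw [h21, Matrix.mul_assoc]
    exact h7
  have hmain := core_identity E (dataX Xp Xm Um) Φ.toBlocks₁₁ Φ.toBlocks₁₂ Φ.toBlocks₂₁
    Φ.toBlocks₂₂ Φ22d Qh R hdsym h21 kker h22d21 hQh hR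
  rw [fromBlocks_toBlocks] at hmain
  rw [hmain]
  have hexp : ∀ (G0 : Matrix (Fin n ⊕ (Fin n ⊕ Fin m)) (Fin p) ℝ)
      (H0 : Matrix (Fin n ⊕ (Fin n ⊕ Fin m)) (Fin T) ℝ),
      rowS A B * (G0 * G0ᵀ - H0 * H0ᵀ) * (rowS A B)ᵀ
        = (rowS A B * G0) * (rowS A B * G0)ᵀ - (rowS A B * H0) * (rowS A B * H0)ᵀ := by
    intro G0 H0
    simp only [Matrix.mul_sub, Matrix.sub_mul, transpose_mul, Matrix.mul_assoc]
  rw [hexp, contraction_param]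
  simp only [Matrix.mul_assoc]
end
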